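/- arXiv:2407.19741 — 7 statements merged into one kernel-verified Lean document; each statement's English description precedes it below -/
import Mathlib

section
/- Let φ : [0,∞) → [0,∞) be a measurable probability density with ∫_0^∞ φ(s) ds = 1 and finite positive mean m = ∫_0^∞ s φ(s) ds ∈ (0,∞). Let (c_T)_{T>0} be reals with 0 < c_T < 1 for all T and lim_{T→∞} T(1 − c_T) = +∞. Define Ψ̂^T(t) = ∑_{k≥1} (c_T)^k φ^{*k}(t). Then Ψ̂^T(T·) converges weakly to 0: for every x ≥ 0 and every bounded continuous function g : [0,∞) → ℝ, lim_{T→∞} ∫_0^x g(u) Ψ̂^T(Tu) du = 0. -/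
open MeasureTheory Filter Topology

/-- Convolution powers: `convPow ψ n = ψ^{*(n+1)}`, i.e. `convPow ψ 0 = ψ` and
`convPow ψ (n+1) t = ∫_0^t ψ(t-s) ψ^{*(n+1)}(s) ds`. -/
noncomputable def convPow (ψ : ℝ → ℝ) : ℕ → ℝ → ℝ
  | 0 => ψ
  | n + 1 => fun t => ∫ s in (0:ℝ)..t, ψ (t - s) * convPow ψ n s

namespace StmtAux1

lemma convPow_measurable {φ : ℝ → ℝ} (hφ : Measurable φ) (n : ℕ) :
    Measurable (convPow φ n) := by
  induction n with
  | zero => exact hφ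
  | succ n ih =>
    have hh : Measurable (fun p : ℝ × ℝ => φ (p.1 - p.2) * convPow φ n p.2) :=
      (hφ.comp (measurable_fst.sub measurable_snd)).mul (ih.comp measurable_snd)
    have key : ∀ (A : Set (ℝ × ℝ)), MeasurableSet A →
        Measurable (fun t => ∫ s, {s : ℝ | (t, s) ∈ A}.indicator
          (fun s => φ (t - s) * convPow φ n s) s) := by
      intro A hA
      have hH : Measurable (fun p : ℝ × ℝ => A.indicator
          (fun p : ℝ × ℝ => φ (p.1 - p.2) * convPow φ n p.2) p) := hh.indicator hA
      have := hH.stronglyMeasurable.integral_prod_right' (ν := (volume : Measure ℝ))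
      exact this.measurable
    have h1 : MeasurableSet {p : ℝ × ℝ | 0 < p.2 ∧ p.2 ≤ p.1} :=
      (measurableSet_lt measurable_const measurable_snd).inter
        (measurableSet_le measurable_snd measurable_fst)
    have h2 : MeasurableSet {p : ℝ × ℝ | p.1 < p.2 ∧ p.2 ≤ 0} :=
      (measurableSet_lt measurable_fst measurable_snd).inter
        (measurableSet_le measurable_snd measurable_const)
    have e : (convPow φ (n + 1)) = fun t =>
        (∫ s, {s : ℝ | (t, s) ∈ {p : ℝ × ℝ | 0 < p.2 ∧ p.2 ≤ p.1}}.indicator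
          (fun s => φ (t - s) * convPow φ n s) s)
        - (∫ s, {s : ℝ | (t, s) ∈ {p : ℝ × ℝ | p.1 < p.2 ∧ p.2 ≤ 0}}.indicator
          (fun s => φ (t - s) * convPow φ n s) s) := by
      funext t
      show (∫ s in (0:ℝ)..t, φ (t - s) * convPow φ n s) = _
      have h1s : {s : ℝ | (t, s) ∈ {p : ℝ × ℝ | 0 < p.2 ∧ p.2 ≤ p.1}} = Set.Ioc 0 t := rfl
      have h2s : {s : ℝ | (t, s) ∈ {p : ℝ × ℝ | p.1 < p.2 ∧ p.2 ≤ 0}} = Set.Ioc t 0 := rfl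
      rw [h1s, h2s, integral_indicator measurableSet_Ioc, integral_indicator measurableSet_Ioc]
      rfl
    rw [e]
    exact (key _ h1).sub (key _ h2)

lemma convPow_neg {φ : ℝ → ℝ} (hφneg : ∀ s < (0:ℝ), φ s = 0) (n : ℕ) :
    ∀ t < (0:ℝ), convPow φ n t = 0 := by
  intro t ht
  cases n with
  | zero => exact hφneg t ht
  | succ n =>
    show (∫ s in (0:ℝ)..t, φ (t - s) * convPow φ n s) = 0
    rw [intervalIntegral.integral_of_ge ht.le]
    have : ∀ s ∈ Set.Ioc t 0, φ (t - s) * convPow φ n s = 0 := by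
      intro s hs
      have : t - s < 0 := by linarith [hs.1]
      rw [hφneg _ this, zero_mul]
    rw [setIntegral_eq_zero_of_forall_eq_zero this, neg_zero]

lemma convPow_nonneg {φ : ℝ → ℝ} (hφnonneg : ∀ s, 0 ≤ φ s)
    (hφneg : ∀ s < (0:ℝ), φ s = 0) (n : ℕ) : ∀ t, 0 ≤ convPow φ n t := by
  induction n with
  | zero => exact hφnonneg
  | succ n ih =>
    intro t
    rcases lt_or_ge t 0 with ht | ht
    · rw [convPow_neg hφneg (n + 1) t ht]
    · show 0 ≤ ∫ s in (0:ℝ)..t, φ (t - s) * convPow φ n s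
      apply intervalIntegral.integral_nonneg ht
      intro u _
      exact mul_nonneg (hφnonneg _) (ih u)

lemma lintegral_phi {φ : ℝ → ℝ} (hφnonneg : ∀ s, 0 ≤ φ s)
    (hφneg : ∀ s < (0:ℝ), φ s = 0) (hφint : IntegrableOn φ (Set.Ioi 0))
    (hφ1 : ∫ s in Set.Ioi (0:ℝ), φ s = 1) :
    ∫⁻ t, ENNReal.ofReal (φ t) = 1 := by
  have h0 : ∀ᵐ t : ℝ, t ≠ (0:ℝ) := by
    have h1 : volume ({0} : Set ℝ) = 0 := measure_singleton 0
    rw [ae_iff]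
    convert h1 using 2
    ext t; simp
  have hae : (fun t => ENNReal.ofReal (φ t)) =ᵐ[volume]
      (Set.Ioi (0:ℝ)).indicator (fun t => ENNReal.ofReal (φ t)) := by
    filter_upwards [h0] with t ht
    rcases lt_or_gt_of_ne ht with h | h
    · rw [hφneg t h, Set.indicator_of_notMem (by simpa using h.le)]
      simp
    · rw [Set.indicator_of_mem (Set.mem_Ioi.2 h)]
  rw [lintegral_congr_ae hae, lintegral_indicator measurableSet_Ioi _,
    ← ofReal_integral_eq_lintegral_ofReal hφint
      (Eventually.of_forall fun s => hφnonneg s), hφ1, ENNReal.ofReal_one]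

lemma lintegral_convPow_le {φ : ℝ → ℝ} (hφmeas : Measurable φ) (hφnonneg : ∀ s, 0 ≤ φ s)
    (hφneg : ∀ s < (0:ℝ), φ s = 0) (hφint : IntegrableOn φ (Set.Ioi 0))
    (hφ1 : ∫ s in Set.Ioi (0:ℝ), φ s = 1) (n : ℕ) :
    ∫⁻ t, ENNReal.ofReal (convPow φ n t) ≤ 1 := by
  have hIφ := lintegral_phi hφnonneg hφneg hφint hφ1
  induction n with
  | zero => exact le_of_eq hIφ
  | succ n ih =>
    have hqmeas := convPow_measurable hφmeas n
    have hqnn := convPow_nonneg hφnonneg hφneg n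
    have step : ∀ t, ENNReal.ofReal (convPow φ (n + 1) t) ≤
        ∫⁻ s, ENNReal.ofReal (φ (t - s)) * ENNReal.ofReal (convPow φ n s) := by
      intro t
      rcases lt_or_ge t 0 with ht | ht
      · rw [convPow_neg hφneg (n + 1) t ht]; simp
      · show ENNReal.ofReal (∫ s in (0:ℝ)..t, φ (t - s) * convPow φ n s) ≤ _
        rw [intervalIntegral.integral_of_le ht]
        have hle1 : ENNReal.ofReal (∫ s in Set.Ioc 0 t, φ (t - s) * convPow φ n s) ≤
            ∫⁻ s in Set.Ioc 0 t, ENNReal.ofReal (φ (t - s) * convPow φ n s) := by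
          by_cases hint : IntegrableOn (fun s => φ (t - s) * convPow φ n s) (Set.Ioc 0 t)
          · exact le_of_eq (ofReal_integral_eq_lintegral_ofReal hint
              (Eventually.of_forall fun s => mul_nonneg (hφnonneg _) (hqnn s)))
          · rw [integral_undef hint]; simp
        refine hle1.trans ?_
        have heq : ∀ s, ENNReal.ofReal (φ (t - s) * convPow φ n s)
            = ENNReal.ofReal (φ (t - s)) * ENNReal.ofReal (convPow φ n s) :=
          fun s => ENNReal.ofReal_mul (hφnonneg _)
        simp_rw [heq]
        exact setLIntegral_le_lintegral _ _
    have hunc : Measurable (fun p : ℝ × ℝ =>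
        ENNReal.ofReal (φ (p.1 - p.2)) * ENNReal.ofReal (convPow φ n p.2)) :=
      ((ENNReal.measurable_ofReal.comp (hφmeas.comp (measurable_fst.sub measurable_snd)))).mul
        (ENNReal.measurable_ofReal.comp (hqmeas.comp measurable_snd))
    calc ∫⁻ t, ENNReal.ofReal (convPow φ (n + 1) t)
        ≤ ∫⁻ t, ∫⁻ s, ENNReal.ofReal (φ (t - s)) * ENNReal.ofReal (convPow φ n s) :=
          lintegral_mono step
      _ = ∫⁻ s, ∫⁻ t, ENNReal.ofReal (φ (t - s)) * ENNReal.ofReal (convPow φ n s) :=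
          lintegral_lintegral_swap hunc.aemeasurable
      _ = ∫⁻ s, (∫⁻ t, ENNReal.ofReal (φ (t - s))) * ENNReal.ofReal (convPow φ n s) := by
          refine lintegral_congr fun s => lintegral_mul_const _ ?_
          exact ENNReal.measurable_ofReal.comp (hφmeas.comp (measurable_id.sub measurable_const))
      _ = ∫⁻ s, ENNReal.ofReal (convPow φ n s) := by
          refine lintegral_congr fun s => ?_
          rw [lintegral_sub_right_eq_self (fun t => ENNReal.ofReal (φ t)) s, hIφ, one_mul]
      _ ≤ 1 := ih

lemma tsum_eq_toReal {a : ℕ → ℝ} (h : ∀ n, 0 ≤ a n) :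
    ∑' n, a n = (∑' n, ENNReal.ofReal (a n)).toReal := by
  by_cases hs : Summable a
  · rw [← ENNReal.ofReal_tsum_of_nonneg h hs, ENNReal.toReal_ofReal (tsum_nonneg h)]
  · rw [tsum_eq_zero_of_not_summable hs]
    have htop : (∑' n, ENNReal.ofReal (a n)) = ⊤ := by
      by_contra hne
      apply hs
      have hsum : Summable (fun n => (a n).toNNReal) :=
        ENNReal.tsum_coe_ne_top_iff_summable.1 (by simpa [ENNReal.ofReal] using hne)
      exact (NNReal.summable_coe.2 hsum).congr fun n => Real.coe_toNNReal _ (h n)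
    rw [htop]; simp

lemma lintegral_scale (G : ℝ → ENNReal) (hG : Measurable G) {T : ℝ} (hT : 0 < T) (x : ℝ) :
    ∫⁻ u in Set.Ioc 0 x, G (T * u) = ENNReal.ofReal T⁻¹ * ∫⁻ v in Set.Ioc 0 (T * x), G v := by
  have hind : ∀ u, (Set.Ioc (0:ℝ) x).indicator (fun u => G (T * u)) u
      = (Set.Ioc 0 (T * x)).indicator G (T * u) := by
    intro u
    by_cases hu : u ∈ Set.Ioc (0:ℝ) x
    · rw [Set.indicator_of_mem hu, Set.indicator_of_mem]
      exact ⟨mul_pos hT hu.1, mul_le_mul_of_nonneg_left hu.2 hT.le⟩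
    · rw [Set.indicator_of_notMem hu, Set.indicator_of_notMem]
      intro hmem
      refine hu ⟨?_, le_of_mul_le_mul_left hmem.2 hT⟩
      nlinarith [hmem.1]
  have hHm : Measurable ((Set.Ioc (0:ℝ) (T * x)).indicator G) :=
    hG.indicator measurableSet_Ioc
  rw [← lintegral_indicator measurableSet_Ioc, ← lintegral_indicator measurableSet_Ioc]
  simp_rw [hind]
  rw [← lintegral_map hHm (measurable_const_mul T),
    Real.map_volume_mul_left (ne_of_gt hT), lintegral_smul_measure,
    abs_of_pos (inv_pos.2 hT), smul_eq_mul]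

end StmtAux1

theorem stmt1
    (φ : ℝ → ℝ) (hφmeas : Measurable φ) (hφnonneg : ∀ s, 0 ≤ φ s)
    (hφneg : ∀ s < (0:ℝ), φ s = 0)
    (hφint : IntegrableOn φ (Set.Ioi 0))
    (hφ1 : ∫ s in Set.Ioi (0:ℝ), φ s = 1)
    (m : ℝ) (hm : 0 < m)
    (hmint : IntegrableOn (fun s => s * φ s) (Set.Ioi 0))
    (hmval : ∫ s in Set.Ioi (0:ℝ), s * φ s = m)
    (c : ℝ → ℝ) (hc : ∀ T > 0, 0 < c T ∧ c T < 1)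
    (hclim : Tendsto (fun T => T * (1 - c T)) atTop atTop)
    (Ψhat : ℝ → ℝ → ℝ)
    (hΨhat : ∀ T t, Ψhat T t = ∑' n : ℕ, (c T) ^ (n + 1) * convPow φ n t)
    (x : ℝ) (hx : 0 ≤ x)
    (g : ℝ → ℝ) (hgcont : Continuous g) (hgbdd : ∃ C, ∀ u, |g u| ≤ C) :
    Tendsto (fun T => ∫ u in (0:ℝ)..x, g u * Ψhat T (T * u)) atTop
      (𝓝 0) := by
  classical
  obtain ⟨C, hC⟩ := hgbdd
  set C0 := max C 0 with hC0def
  have hC0nn : 0 ≤ C0 := le_max_right _ _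
  have hgC0 : ∀ u, |g u| ≤ C0 := fun u => (hC u).trans (le_max_left _ _)
  have key : ∀ T : ℝ, 0 < T →
      |∫ u in (0:ℝ)..x, g u * Ψhat T (T * u)| ≤ C0 * (T * (1 - c T))⁻¹ := by
    intro T hT
    obtain ⟨hc0, hc1⟩ := hc T hT
    set F : ℝ → ENNReal := fun t => ∑' n : ℕ, ENNReal.ofReal (c T ^ (n + 1) * convPow φ n t)
      with hFdef
    have hnmeas : ∀ n : ℕ, Measurable (fun t => ENNReal.ofReal (c T ^ (n + 1) * convPow φ n t)) :=
      fun n => ENNReal.measurable_ofReal.comp ((StmtAux1.convPow_measurable hφmeas n).const_mul _)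
    have hFmeas : Measurable F := Measurable.ennreal_tsum hnmeas
    have hann : ∀ (n : ℕ) (t : ℝ), 0 ≤ c T ^ (n + 1) * convPow φ n t := fun n t =>
      mul_nonneg (pow_nonneg hc0.le _) (StmtAux1.convPow_nonneg hφnonneg hφneg n t)
    have hΨF : ∀ t, Ψhat T t = (F t).toReal := by
      intro t; rw [hΨhat]; exact StmtAux1.tsum_eq_toReal (fun n => hann n t)
    have hFle : ∫⁻ t, F t ≤ ENNReal.ofReal ((1 - c T)⁻¹) := by
      rw [hFdef, lintegral_tsum fun n => (hnmeas n).aemeasurable]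
      have hterm : ∀ n : ℕ, ∫⁻ t, ENNReal.ofReal (c T ^ (n + 1) * convPow φ n t)
          ≤ ENNReal.ofReal (c T) ^ (n + 1) := by
        intro n
        have heq : ∀ t, ENNReal.ofReal (c T ^ (n + 1) * convPow φ n t)
            = ENNReal.ofReal (c T) ^ (n + 1) * ENNReal.ofReal (convPow φ n t) := by
          intro t
          rw [ENNReal.ofReal_mul (pow_nonneg hc0.le _), ENNReal.ofReal_pow hc0.le]
        simp_rw [heq]
        rw [lintegral_const_mul _
          (StmtAux1.convPow_measurable hφmeas n).ennreal_ofReal]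
        calc ENNReal.ofReal (c T) ^ (n + 1) * ∫⁻ t, ENNReal.ofReal (convPow φ n t)
            ≤ ENNReal.ofReal (c T) ^ (n + 1) * 1 := mul_le_mul_right
              (StmtAux1.lintegral_convPow_le hφmeas hφnonneg hφneg hφint hφ1 n) _
          _ = _ := mul_one _
      calc (∑' n : ℕ, ∫⁻ t, ENNReal.ofReal (c T ^ (n + 1) * convPow φ n t))
          ≤ ∑' n : ℕ, ENNReal.ofReal (c T) ^ (n + 1) := ENNReal.tsum_le_tsum hterm
        _ ≤ ∑' n : ℕ, ENNReal.ofReal (c T) ^ n := by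
            refine ENNReal.tsum_le_tsum fun n => ?_
            rw [pow_succ]
            exact (mul_le_mul_right (ENNReal.ofReal_le_one.2 hc1.le) _).trans_eq (mul_one _)
        _ = (1 - ENNReal.ofReal (c T))⁻¹ := ENNReal.tsum_geometric _
        _ = ENNReal.ofReal ((1 - c T)⁻¹) := by
            rw [ENNReal.ofReal_inv_of_pos (by linarith), ENNReal.ofReal_sub _ hc0.le,
              ENNReal.ofReal_one]
    have hsub : ∫⁻ u in Set.Ioc 0 x, F (T * u) ≤ ENNReal.ofReal ((T * (1 - c T))⁻¹) := by
      rw [StmtAux1.lintegral_scale F hFmeas hT x]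
      calc ENNReal.ofReal T⁻¹ * ∫⁻ v in Set.Ioc 0 (T * x), F v
          ≤ ENNReal.ofReal T⁻¹ * ∫⁻ v, F v :=
            mul_le_mul_right (setLIntegral_le_lintegral _ _) _
        _ ≤ ENNReal.ofReal T⁻¹ * ENNReal.ofReal ((1 - c T)⁻¹) := mul_le_mul_right hFle _
        _ = ENNReal.ofReal ((T * (1 - c T))⁻¹) := by
            rw [← ENNReal.ofReal_mul (inv_nonneg.2 hT.le), mul_inv]
    have hΨmeasT : Measurable (fun u => Ψhat T (T * u)) := by
      have he : (fun u => Ψhat T (T * u)) = fun u => (F (T * u)).toReal :=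
        funext fun u => hΨF _
      rw [he]
      exact (hFmeas.comp (measurable_const_mul T)).ennreal_toReal
    have hΨnn : ∀ u, 0 ≤ Ψhat T (T * u) := fun u => by
      rw [hΨF]; exact ENNReal.toReal_nonneg
    have hlintΨ : ∫⁻ u in Set.Ioc 0 x, ENNReal.ofReal (Ψhat T (T * u))
        ≤ ENNReal.ofReal ((T * (1 - c T))⁻¹) := by
      refine (lintegral_mono fun u => ?_).trans hsub
      rw [hΨF]; exact ENNReal.ofReal_toReal_le
    have hintΨ : IntegrableOn (fun u => Ψhat T (T * u)) (Set.Ioc 0 x) := by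
      refine ⟨hΨmeasT.aestronglyMeasurable.restrict, ?_⟩
      rw [hasFiniteIntegral_iff_ofReal (Eventually.of_forall hΨnn)]
      exact lt_of_le_of_lt hlintΨ ENNReal.ofReal_lt_top
    have hintg : IntegrableOn (fun u => g u * Ψhat T (T * u)) (Set.Ioc 0 x) :=
      hintΨ.bdd_mul (c := C0) hgcont.aestronglyMeasurable (Eventually.of_forall fun u => by
        simpa using hgC0 u)
    rw [intervalIntegral.integral_of_le hx]
    have h1 : |∫ u in Set.Ioc 0 x, g u * Ψhat T (T * u)|
        ≤ ∫ u in Set.Ioc 0 x, C0 * Ψhat T (T * u) := by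
      have hn := norm_integral_le_integral_norm
        (μ := volume.restrict (Set.Ioc 0 x)) (fun u => g u * Ψhat T (T * u))
      rw [Real.norm_eq_abs] at hn
      refine hn.trans ?_
      refine integral_mono hintg.norm (hintΨ.const_mul C0) fun u => ?_
      simp only [norm_mul, Real.norm_eq_abs]
      rw [abs_of_nonneg (hΨnn u)]
      exact mul_le_mul_of_nonneg_right (hgC0 u) (hΨnn u)
    have h2 : ∫ u in Set.Ioc 0 x, C0 * Ψhat T (T * u)
        = C0 * ∫ u in Set.Ioc 0 x, Ψhat T (T * u) := integral_const_mul _ _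
    have h3 : ∫ u in Set.Ioc 0 x, Ψhat T (T * u) ≤ (T * (1 - c T))⁻¹ := by
      rw [integral_eq_lintegral_of_nonneg_ae (Eventually.of_forall hΨnn)
        hΨmeasT.aestronglyMeasurable.restrict]
      refine (ENNReal.toReal_mono ENNReal.ofReal_ne_top hlintΨ).trans_eq ?_
      rw [ENNReal.toReal_ofReal (inv_nonneg.2 (mul_nonneg hT.le (by linarith)))]
    calc |∫ u in Set.Ioc 0 x, g u * Ψhat T (T * u)|
        ≤ C0 * ∫ u in Set.Ioc 0 x, Ψhat T (T * u) := by rw [← h2]; exact h1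
      _ ≤ C0 * (T * (1 - c T))⁻¹ := mul_le_mul_of_nonneg_left h3 hC0nn
  have hb : Tendsto (fun T => C0 * (T * (1 - c T))⁻¹) atTop (𝓝 0) := by
    have := hclim.inv_tendsto_atTop
    have h2 := this.const_mul C0
    simpa using h2
  refine squeeze_zero_norm' ?_ hb
  filter_upwards [eventually_gt_atTop (0:ℝ)] with T hT
  simpa [Real.norm_eq_abs] using key T hT
end

section
/- Let φ : [0,∞) → [0,∞) be a measurable probability density with ∫_0^∞ φ(s) ds = 1 and finite positive mean m = ∫_0^∞ s φ(s) ds ∈ (0,∞). For each T > 0 let (Ω, 𝔉, P) carry an i.i.d. sequence (X_i)_{i≥1} of random variables whose common law has density φ, and a random variable I^T with values in {1,2,…} satisfying P(I^T = k) = (1 − c_T) c_T^{k−1} for all k ≥ 1, independent of the sequence (X_i), where 0 < c_T < 1. If lim_{T→∞} T(1 − c_T) = λ for a fixed λ > 0, then X^T := (1/T) ∑_{i=1}^{I^T} X_i converges in distribution, as T → ∞, to the exponential distribution with rate λ/m (density (λ/m) e^{−(λ/m)x} on [0,∞)). -/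
open MeasureTheory Filter Topology Set


lemma stepB (b : ℕ → ℝ) (C : ℝ) (hb : ∀ k, |b k| ≤ C) (c : ℝ) (hc0 : 0 < c) (hc1 : c < 1) :
    ∫ u in Set.Ioi (0:ℝ), b ⌈u / (-Real.log c)⌉₊ * Real.exp (-u)
      = ∑' k : ℕ, ((1 - c) * c ^ k) * b (k + 1) := by
  set θ : ℝ := -Real.log c with hθdef
  have hθ : 0 < θ := by
    have := Real.log_neg hc0 hc1
    simp only [hθdef]; linarith
  have hC0 : 0 ≤ C := le_trans (abs_nonneg _) (hb 0)
  set s : ℕ → Set ℝ := fun k => Ioc ((k:ℝ) * θ) (((k:ℝ) + 1) * θ) with hs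
  have hmeas_s : ∀ k, MeasurableSet (s k) := fun k => measurableSet_Ioc
  have hunion : (⋃ k, s k) = Ioi (0:ℝ) := by
    ext u
    simp only [hs, mem_iUnion, mem_Ioc, mem_Ioi]
    constructor
    · rintro ⟨k, h1, -⟩
      have : (0:ℝ) ≤ (k:ℝ) * θ := mul_nonneg (Nat.cast_nonneg _) hθ.le
      linarith
    · intro hu
      have hn1 : 1 ≤ ⌈u / θ⌉₊ := by
        rw [Nat.one_le_iff_ne_zero, Ne, Nat.ceil_eq_zero, not_le]
        positivity
      refine ⟨⌈u / θ⌉₊ - 1, ?_, ?_⟩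
      · have h1 : ((⌈u / θ⌉₊ - 1 : ℕ) : ℝ) < u / θ := by
          rw [← Nat.lt_ceil]; omega
        calc ((⌈u / θ⌉₊ - 1 : ℕ) : ℝ) * θ < (u / θ) * θ := by
              exact mul_lt_mul_of_pos_right h1 hθ
          _ = u := div_mul_cancel₀ u hθ.ne'
      · have h2 : u / θ ≤ (⌈u / θ⌉₊ : ℝ) := Nat.le_ceil _
        have hcast : ((⌈u / θ⌉₊ - 1 : ℕ) : ℝ) + 1 = (⌈u / θ⌉₊ : ℝ) := by
          push_cast [Nat.cast_sub hn1]
          ring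
        rw [hcast]
        calc u = (u / θ) * θ := (div_mul_cancel₀ u hθ.ne').symm
          _ ≤ (⌈u / θ⌉₊ : ℝ) * θ := mul_le_mul_of_nonneg_right h2 hθ.le
  have hdisj : Pairwise (Function.onFun Disjoint s) := by
    intro k l hkl
    have key : ∀ k l : ℕ, k < l → Disjoint (s k) (s l) := by
      intro k l hlt
      rw [hs]
      rw [Set.Ioc_disjoint_Ioc]
      have h1 : ((k:ℝ) + 1) * θ ≤ (l:ℝ) * θ := by
        have : (k:ℝ) + 1 ≤ (l:ℝ) := by exact_mod_cast hlt
        exact mul_le_mul_of_nonneg_right this hθ.le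
      calc min (((k:ℝ) + 1) * θ) (((l:ℝ) + 1) * θ) ≤ ((k:ℝ) + 1) * θ := min_le_left _ _
        _ ≤ (l:ℝ) * θ := h1
        _ ≤ max ((k:ℝ) * θ) ((l:ℝ) * θ) := le_max_right _ _
    rcases hkl.lt_or_gt with h | h
    · exact key _ _ h
    · exact (key _ _ h).symm
  have hmeasf : Measurable (fun u : ℝ => b ⌈u / θ⌉₊ * Real.exp (-u)) := by
    exact ((measurable_from_top).comp (Nat.measurable_ceil.comp (measurable_id.div_const θ))).mul
      (Real.continuous_exp.comp continuous_neg).measurable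
  have hboundint : IntegrableOn (fun u : ℝ => C * Real.exp (-u)) (Ioi (0:ℝ)) := by
    have h : IntegrableOn (fun x : ℝ => C * Real.exp (-1 * x)) (Ioi (0:ℝ)) :=
      (exp_neg_integrableOn_Ioi (0:ℝ) (one_pos)).const_mul C
    exact h.congr_fun (fun x _ => by norm_num) measurableSet_Ioi
  have hint : IntegrableOn (fun u : ℝ => b ⌈u / θ⌉₊ * Real.exp (-u)) (Ioi (0:ℝ)) := by
    refine hboundint.mono' hmeasf.aestronglyMeasurable (ae_of_all _ fun u => ?_)
    rw [norm_mul, Real.norm_eq_abs, Real.norm_eq_abs, abs_of_pos (Real.exp_pos _)]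
    exact mul_le_mul_of_nonneg_right (hb _) (Real.exp_pos _).le
  calc ∫ u in Ioi (0:ℝ), b ⌈u / θ⌉₊ * Real.exp (-u)
      = ∫ u in ⋃ k, s k, b ⌈u / θ⌉₊ * Real.exp (-u) := by rw [hunion]
    _ = ∑' k : ℕ, ∫ u in s k, b ⌈u / θ⌉₊ * Real.exp (-u) :=
        integral_iUnion hmeas_s hdisj (hunion ▸ hint)
    _ = ∑' k : ℕ, ((1 - c) * c ^ k) * b (k + 1) := by
        refine tsum_congr fun k => ?_
        have hab : (k:ℝ) * θ ≤ ((k:ℝ) + 1) * θ := by nlinarith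
        have hceil : ∀ u ∈ s k, ⌈u / θ⌉₊ = k + 1 := by
          intro u hu
          rw [hs] at hu
          obtain ⟨h1, h2⟩ := hu
          rw [Nat.ceil_eq_iff (Nat.succ_ne_zero k)]
          constructor
          · push_cast [Nat.add_sub_cancel]
            rw [lt_div_iff₀ hθ]
            exact h1
          · rw [div_le_iff₀ hθ]
            push_cast
            exact h2
        calc ∫ u in s k, b ⌈u / θ⌉₊ * Real.exp (-u)
            = ∫ u in s k, b (k+1) * Real.exp (-u) := by
              refine setIntegral_congr_fun (hmeas_s k) fun u hu => ?_
              rw [hceil u hu]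
          _ = b (k+1) * ∫ u in s k, Real.exp (-u) := integral_const_mul _ _
          _ = b (k+1) * (Real.exp (-((k:ℝ) * θ)) - Real.exp (-(((k:ℝ)+1) * θ))) := by
              congr 1
              rw [hs]
              rw [← intervalIntegral.integral_of_le hab]
              rw [intervalIntegral.integral_comp_neg (fun x => Real.exp x)]
              rw [integral_exp]
          _ = ((1 - c) * c ^ k) * b (k + 1) := by
              have hek : Real.exp (-((k:ℝ) * θ)) = c ^ k := by
                rw [hθdef]
                rw [show -((k:ℝ) * -Real.log c) = (k:ℝ) * Real.log c by ring]
                rw [Real.exp_nat_mul, Real.exp_log hc0]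
              have hek1 : Real.exp (-(((k:ℝ)+1) * θ)) = c ^ (k+1) := by
                rw [hθdef]
                rw [show -(((k:ℝ)+1) * -Real.log c) = ((k:ℝ)+1) * Real.log c by ring]
                rw [show ((k:ℝ)+1) = ((k+1:ℕ):ℝ) by push_cast; ring]
                rw [Real.exp_nat_mul, Real.exp_log hc0]
              rw [hek, hek1]
              ring


lemma stepA {Ω : Type*} [MeasurableSpace Ω] (P : Measure Ω) [IsProbabilityMeasure P]
    (X : ℕ → Ω → ℝ) (hXmeas : ∀ i, Measurable (X i))
    (N : Ω → ℕ) (hN : Measurable N) (hN1 : ∀ ω, 1 ≤ N ω)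
    (hind : ProbabilityTheory.IndepFun N (fun ω i => X i ω) P)
    (g : ℝ → ℝ) (hg : Continuous g) (C : ℝ) (hC : ∀ u, |g u| ≤ C) (T : ℝ) :
    ∫ ω, g ((1 / T) * ∑ i ∈ Finset.Icc 1 (N ω), X i ω) ∂P
      = ∑' k : ℕ, (P {ω | N ω = k + 1}).toReal
          * ∫ ω, g ((1 / T) * ∑ i ∈ Finset.Icc 1 (k + 1), X i ω) ∂P := by
  have hC0 : 0 ≤ C := le_trans (abs_nonneg _) (hC 0)
  have hSmeas : ∀ n : ℕ, Measurable (fun ω => ∑ i ∈ Finset.Icc 1 n, X i ω) := fun n =>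
    Finset.measurable_sum _ fun i _ => hXmeas i
  have hFmeas : Measurable (fun ω => g ((1 / T) * ∑ i ∈ Finset.Icc 1 (N ω), X i ω)) := by
    have h1 : Measurable fun p : Ω × ℕ => ∑ i ∈ Finset.Icc 1 p.2, X i p.1 :=
      measurable_from_prod_countable_left fun n => hSmeas n
    have h2 : Measurable fun ω => ∑ i ∈ Finset.Icc 1 (N ω), X i ω :=
      h1.comp (measurable_id.prodMk hN)
    exact hg.measurable.comp (measurable_const.mul h2)
  have hFint : Integrable (fun ω => g ((1 / T) * ∑ i ∈ Finset.Icc 1 (N ω), X i ω)) P :=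
    (integrable_const C).mono' hFmeas.aestronglyMeasurable
      (ae_of_all _ fun ω => by simpa [Real.norm_eq_abs] using hC _)
  set s : ℕ → Set Ω := fun k => {ω | N ω = k + 1} with hs
  have hmeas_s : ∀ k, MeasurableSet (s k) := fun k => hN (measurableSet_singleton (k + 1))
  have hdisj : Pairwise (Function.onFun Disjoint s) := by
    intro k l hkl
    rw [Function.onFun, Set.disjoint_left]
    rintro ω h1 h2
    simp only [hs, mem_setOf_eq] at h1 h2
    omega
  have huniv : (⋃ k, s k) = univ := by
    ext ω
    simp only [hs, mem_iUnion, mem_setOf_eq, mem_univ, iff_true]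
    exact ⟨N ω - 1, by have := hN1 ω; omega⟩
  calc ∫ ω, g ((1 / T) * ∑ i ∈ Finset.Icc 1 (N ω), X i ω) ∂P
      = ∫ ω in ⋃ k, s k, g ((1 / T) * ∑ i ∈ Finset.Icc 1 (N ω), X i ω) ∂P := by
        rw [huniv, setIntegral_univ]
    _ = ∑' k : ℕ, ∫ ω in s k, g ((1 / T) * ∑ i ∈ Finset.Icc 1 (N ω), X i ω) ∂P :=
        integral_iUnion hmeas_s hdisj (huniv ▸ hFint.integrableOn)
    _ = ∑' k : ℕ, (P {ω | N ω = k + 1}).toReal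
          * ∫ ω, g ((1 / T) * ∑ i ∈ Finset.Icc 1 (k + 1), X i ω) ∂P := by
        refine tsum_congr fun k => ?_
        have hstep1 : ∫ ω in s k, g ((1 / T) * ∑ i ∈ Finset.Icc 1 (N ω), X i ω) ∂P
            = ∫ ω in s k, g ((1 / T) * ∑ i ∈ Finset.Icc 1 (k + 1), X i ω) ∂P := by
          refine setIntegral_congr_fun (hmeas_s k) fun ω hω => ?_
          simp only [hs, mem_setOf_eq] at hω
          rw [hω]
        rw [hstep1]
        set φk : ℕ → ℝ := fun n => if n = k + 1 then (1:ℝ) else 0 with hφk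
        set ψ : (ℕ → ℝ) → ℝ := fun x => g ((1 / T) * ∑ i ∈ Finset.Icc 1 (k + 1), x i) with hψ
        have hφm : Measurable φk := measurable_from_top
        have hψm : Measurable ψ :=
          hg.measurable.comp (measurable_const.mul
            (Finset.measurable_sum _ fun i _ => measurable_pi_apply i))
        have hprod : ProbabilityTheory.IndepFun (φk ∘ N) (ψ ∘ fun ω i => X i ω) P :=
          hind.comp hφm hψm
        have hmeas1 : Measurable (φk ∘ N) := hφm.comp hN
        have hmeas2 : Measurable (ψ ∘ fun ω i => X i ω) :=
          hψm.comp (measurable_pi_lambda _ fun i => hXmeas i)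
        have hint1 : Integrable (φk ∘ N) P :=
          (integrable_const (1:ℝ)).mono' hmeas1.aestronglyMeasurable
            (ae_of_all _ fun ω => by
              simp only [Function.comp_apply, hφk, Real.norm_eq_abs]
              split <;> simp)
        have hint2 : Integrable (ψ ∘ fun ω i => X i ω) P :=
          (integrable_const C).mono' hmeas2.aestronglyMeasurable
            (ae_of_all _ fun ω => by
              simpa [Function.comp_apply, hψ, Real.norm_eq_abs] using hC _)
        have key := hprod.integral_mul_eq_mul_integral hint1.aestronglyMeasurable hint2.aestronglyMeasurable
        have hindicator : (fun ω => (φk ∘ N) ω * (ψ ∘ fun ω i => X i ω) ω)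
            = Set.indicator (s k) (fun ω => g ((1 / T) * ∑ i ∈ Finset.Icc 1 (k + 1), X i ω)) := by
          funext ω
          by_cases h : N ω = k + 1
          · rw [Set.indicator_of_mem (by simpa [hs] using h)]
            simp [hφk, hψ, h]
          · rw [Set.indicator_of_notMem (by simpa [hs] using h)]
            simp [hφk, hψ, h]
        have hindicator1 : (φk ∘ N) = Set.indicator (s k) (fun _ => (1:ℝ)) := by
          funext ω
          by_cases h : N ω = k + 1
          · rw [Set.indicator_of_mem (by simpa [hs] using h)]
            simp [hφk, h]
          · rw [Set.indicator_of_notMem (by simpa [hs] using h)]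
            simp [hφk, h]
        have hL : ∫ ω, (φk ∘ N) ω * (ψ ∘ fun ω i => X i ω) ω ∂P
            = ∫ ω in s k, g ((1 / T) * ∑ i ∈ Finset.Icc 1 (k + 1), X i ω) ∂P := by
          rw [hindicator, integral_indicator (hmeas_s k)]
        have hR1 : ∫ ω, (φk ∘ N) ω ∂P = (P (s k)).toReal := by
          rw [hindicator1, integral_indicator (hmeas_s k)]
          simp [Measure.real]
        have hR2 : ∫ ω, (ψ ∘ fun ω i => X i ω) ω ∂P
            = ∫ ω, g ((1 / T) * ∑ i ∈ Finset.Icc 1 (k + 1), X i ω) ∂P := rfl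
        have key' : ∫ ω, (φk ∘ N) ω * (ψ ∘ fun ω i => X i ω) ω ∂P
            = (∫ ω, (φk ∘ N) ω ∂P) * ∫ ω, (ψ ∘ fun ω i => X i ω) ω ∂P := key
        rw [← hL, key', hR1, hR2]


section Main
variable {Ω : Type*} [MeasurableSpace Ω] (P : Measure Ω) [IsProbabilityMeasure P]
    (φ : ℝ → ℝ) (hφmeas : Measurable φ) (hφnonneg : ∀ s, 0 ≤ φ s)
    (hφneg : ∀ s < (0:ℝ), φ s = 0)
    (m : ℝ) (hm : 0 < m)
    (hmint : IntegrableOn (fun s => s * φ s) (Set.Ioi 0))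
    (hmval : ∫ s in Set.Ioi (0:ℝ), s * φ s = m)
    (X : ℕ → Ω → ℝ) (hXmeas : ∀ i, Measurable (X i))
    (hXlaw : ∀ i, Measure.map (X i) P
      = (volume : Measure ℝ).withDensity fun s => ENNReal.ofReal (φ s))

include hφmeas hφnonneg hφneg hmint hXmeas hXlaw in
lemma prelim_int : ∀ i, Integrable (X i) P := by
  have hxφ : Integrable (fun x : ℝ => x * φ x) volume := by
    have hIic : IntegrableOn (fun x : ℝ => x * φ x) (Iic 0) := by
      refine (integrableOn_congr_fun (g := fun _ => (0:ℝ)) ?_ measurableSet_Iic).2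
        (integrableOn_zero)
      intro x hx
      rcases lt_or_eq_of_le (mem_Iic.mp hx) with h | h
      · simp [hφneg x h]
      · simp [h]
    have := hIic.union hmint
    rwa [Set.Iic_union_Ioi, integrableOn_univ] at this
  intro i
  have h1 : Integrable (id : ℝ → ℝ) (Measure.map (X i) P) := by
    rw [hXlaw i]
    rw [integrable_withDensity_iff hφmeas.ennreal_ofReal
      (ae_of_all _ fun x => ENNReal.ofReal_lt_top)]
    refine hxφ.congr (ae_of_all _ fun x => ?_)
    simp [ENNReal.toReal_ofReal (hφnonneg x)]
  have := (integrable_map_measure aestronglyMeasurable_id (hXmeas i).aemeasurable).1 h1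
  simpa [Function.comp] using this

include hφmeas hφnonneg hφneg hm hmval hXmeas hXlaw in
lemma prelim_mean : ∀ i, ∫ ω, X i ω ∂P = m := by
  intro i
  have hdens : (fun s : ℝ => ENNReal.ofReal (φ s)) = fun s => ((Real.toNNReal (φ s) : ENNReal)) := rfl
  calc ∫ ω, X i ω ∂P = ∫ x, id x ∂(Measure.map (X i) P) :=
        (integral_map (hXmeas i).aemeasurable aestronglyMeasurable_id).symm
    _ = ∫ x, x ∂((volume : Measure ℝ).withDensity fun s => ENNReal.ofReal (φ s)) := by
        rw [hXlaw i]; rfl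
    _ = ∫ x, Real.toNNReal (φ x) • x ∂(volume : Measure ℝ) := by
        rw [hdens]
        exact integral_withDensity_eq_integral_smul hφmeas.real_toNNReal _
    _ = ∫ x, x * φ x ∂(volume : Measure ℝ) := by
        refine integral_congr_ae (ae_of_all _ fun x => ?_)
        simp [NNReal.smul_def, Real.coe_toNNReal _ (hφnonneg x), mul_comm]
    _ = ∫ x in Ioi (0:ℝ), x * φ x := by
        refine (setIntegral_eq_integral_of_forall_compl_eq_zero fun x hx => ?_).symm
        simp only [mem_Ioi, not_lt] at hx
        rcases lt_or_eq_of_le hx with h | h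
        · simp [hφneg x h]
        · simp [h]
    _ = m := hmval

end Main


theorem stmt2
    {Ω : Type*} [MeasurableSpace Ω] (P : Measure Ω) [IsProbabilityMeasure P]
    (φ : ℝ → ℝ) (hφmeas : Measurable φ) (hφnonneg : ∀ s, 0 ≤ φ s)
    (hφneg : ∀ s < (0:ℝ), φ s = 0)
    (hφint : IntegrableOn φ (Set.Ioi 0))
    (hφ1 : ∫ s in Set.Ioi (0:ℝ), φ s = 1)
    (m : ℝ) (hm : 0 < m)
    (hmint : IntegrableOn (fun s => s * φ s) (Set.Ioi 0))
    (hmval : ∫ s in Set.Ioi (0:ℝ), s * φ s = m)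
    (c : ℝ → ℝ) (hc : ∀ T > 0, 0 < c T ∧ c T < 1)
    (lam : ℝ) (hlam : 0 < lam)
    (hclim : Tendsto (fun T => T * (1 - c T)) atTop (𝓝 lam))
    -- the i.i.d. sequence (X_i) with common density φ
    (X : ℕ → Ω → ℝ) (hXmeas : ∀ i, Measurable (X i))
    (hXindep : ProbabilityTheory.iIndepFun X P)
    (hXlaw : ∀ i, Measure.map (X i) P
      = (volume : Measure ℝ).withDensity fun s => ENNReal.ofReal (φ s))
    -- the geometric random variables I^T, independent of the sequence (X_i)
    (I : ℝ → Ω → ℕ) (hImeas : ∀ T, Measurable (I T))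
    (hIpos : ∀ T, ∀ ω, 1 ≤ I T ω)
    (hIlaw : ∀ T > 0, ∀ k : ℕ, 1 ≤ k →
      P {ω | I T ω = k} = ENNReal.ofReal ((1 - c T) * c T ^ (k - 1)))
    (hIindep : ∀ T, ProbabilityTheory.IndepFun (I T) (fun ω i => X i ω) P) :
    -- convergence in distribution of X^T = (1/T) ∑_{i=1}^{I^T} X_i
    -- to the exponential distribution with rate λ/m
    ∀ g : ℝ → ℝ, Continuous g → (∃ C, ∀ u, |g u| ≤ C) →
      Tendsto
        (fun T => ∫ ω, g ((1 / T) * ∑ i ∈ Finset.Icc 1 (I T ω), X i ω) ∂P) atTop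
        (𝓝 (∫ x in Set.Ioi (0:ℝ), g x * ((lam / m) * Real.exp (-(lam / m) * x)))) := by
  intro g hg hgbd
  obtain ⟨C, hC⟩ := hgbd
  have hC0 : 0 ≤ C := le_trans (abs_nonneg _) (hC 0)
  have hXint : ∀ i, Integrable (X i) P :=
    prelim_int P φ hφmeas hφnonneg hφneg hmint X hXmeas hXlaw
  have hmean : ∀ i, ∫ ω, X i ω ∂P = m :=
    prelim_mean P φ hφmeas hφnonneg hφneg m hm hmval X hXmeas hXlaw
  -- strong law of large numbers for the partial sums ∑_{i=1}^n X_i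
  have hpair : Pairwise (Function.onFun (ProbabilityTheory.IndepFun · · P) fun i => X (i + 1)) :=
    fun i j hij => hXindep.indepFun (by omega)
  have hident : ∀ i, ProbabilityTheory.IdentDistrib
      ((fun i => X (i + 1)) i) ((fun i => X (i + 1)) 0) P P :=
    fun i => ⟨(hXmeas _).aemeasurable, (hXmeas _).aemeasurable, by
      simp only []; rw [hXlaw, hXlaw]⟩
  have hslln0 := ProbabilityTheory.strong_law_ae_real (fun i => X (i + 1)) (hXint 1) hpair hident
  have hsum_eq : ∀ (n : ℕ) (ω : Ω),
      ∑ i ∈ Finset.Icc 1 n, X i ω = ∑ i ∈ Finset.range n, X (i + 1) ω := by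
    intro n ω
    rw [← Finset.Ico_add_one_right_eq_Icc, Finset.sum_Ico_eq_sum_range]
    simp [add_comm]
  have hslln : ∀ᵐ ω ∂P,
      Tendsto (fun n : ℕ => (∑ i ∈ Finset.Icc 1 n, X i ω) / n) atTop (𝓝 m) := by
    filter_upwards [hslln0] with ω hω
    have hω' : Tendsto (fun n : ℕ => (∑ i ∈ Finset.range n, X (i + 1) ω) / n) atTop
        (𝓝 (∫ ω, X 1 ω ∂P)) := hω
    rw [hmean 1] at hω'
    exact hω'.congr fun n => by rw [hsum_eq]
  -- asymptotics of c T and θ T = -log (c T)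
  have hTpos : ∀ᶠ T : ℝ in atTop, 0 < T := eventually_gt_atTop 0
  have hcT : ∀ᶠ T : ℝ in atTop, 0 < c T ∧ c T < 1 := hTpos.mono fun T hT => hc T hT
  have hθpos : ∀ᶠ T : ℝ in atTop, 0 < -Real.log (c T) := by
    filter_upwards [hcT] with T hT
    have := Real.log_neg hT.1 hT.2
    linarith
  have h1c : Tendsto (fun T => 1 - c T) atTop (𝓝 0) := by
    have h := hclim.mul tendsto_inv_atTop_zero
    rw [mul_zero] at h
    refine h.congr' ?_
    filter_upwards [hTpos] with T hT
    rw [mul_right_comm, mul_inv_cancel₀ hT.ne', one_mul]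
  have hcone : Tendsto c atTop (𝓝 1) := by
    have h := (tendsto_const_nhds : Tendsto (fun _ : ℝ => (1:ℝ)) atTop (𝓝 1)).sub h1c
    rw [sub_zero] at h
    exact h.congr fun T => by ring
  have hlogratio : Tendsto (fun T => Real.log (c T) / (c T - 1)) atTop (𝓝 1) := by
    have hd : HasDerivAt Real.log 1 1 := by simpa using Real.hasDerivAt_log one_ne_zero
    have hs := hasDerivAt_iff_tendsto_slope.mp hd
    have hcne : Tendsto c atTop (𝓝[≠] (1:ℝ)) := by
      rw [tendsto_nhdsWithin_iff]
      refine ⟨hcone, hcT.mono fun T hT => ?_⟩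
      simp only [mem_compl_iff, mem_singleton_iff]
      exact ne_of_lt hT.2
    have h := hs.comp hcne
    refine h.congr fun T => ?_
    simp only [Function.comp_apply, slope_def_field, Real.log_one]
    rw [sub_zero]
  have hTθ : Tendsto (fun T => T * -Real.log (c T)) atTop (𝓝 lam) := by
    have h := hclim.mul hlogratio
    rw [mul_one] at h
    refine h.congr' ?_
    filter_upwards [hTpos, hcT] with T hT hcT'
    have hne : c T - 1 ≠ 0 := by
      have := hcT'.2; intro h'; apply absurd h'; intro h''; linarith
    field_simp
    ring
  have hθ0 : Tendsto (fun T => -Real.log (c T)) atTop (𝓝 0) := by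
    have h := hTθ.mul tendsto_inv_atTop_zero
    rw [mul_zero] at h
    refine h.congr' ?_
    filter_upwards [hTpos] with T hT
    rw [mul_right_comm, mul_inv_cancel₀ hT.ne', one_mul]
  -- the pointwise limit
  have hptw : ∀ u : ℝ, 0 < u →
      Tendsto (fun T => ∫ ω, g ((1 / T) * ∑ i ∈ Finset.Icc 1 ⌈u / (-Real.log (c T))⌉₊, X i ω) ∂P)
        atTop (𝓝 (g ((m / lam) * u))) := by
    intro u hu
    have hinv : Tendsto (fun T => u / (-Real.log (c T))) atTop atTop := by
      have h1 : Tendsto (fun T => (-Real.log (c T))⁻¹) atTop atTop :=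
        tendsto_inv_nhdsGT_zero.comp (tendsto_nhdsWithin_iff.2 ⟨hθ0, hθpos⟩)
      have h2 := h1.const_mul_atTop hu
      exact h2.congr fun T => (div_eq_mul_inv _ _).symm
    have hkR : Tendsto (fun T => ((⌈u / (-Real.log (c T))⌉₊ : ℕ) : ℝ)) atTop atTop :=
      tendsto_atTop_mono (fun T => Nat.le_ceil _) hinv
    have hkinf : Tendsto (fun T => ⌈u / (-Real.log (c T))⌉₊) atTop atTop :=
      tendsto_natCast_atTop_iff.mp hkR
    have hlow : Tendsto (fun T => u / (T * -Real.log (c T))) atTop (𝓝 (u / lam)) :=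
      tendsto_const_nhds.div hTθ hlam.ne'
    have hhigh : Tendsto (fun T => u / (T * -Real.log (c T)) + 1 / T) atTop (𝓝 (u / lam)) := by
      have h2 : Tendsto (fun T : ℝ => 1 / T) atTop (𝓝 0) := by
        simpa using (tendsto_inv_atTop_zero : Tendsto (fun T : ℝ => T⁻¹) atTop (𝓝 0))
      simpa using hlow.add h2
    have hkT : Tendsto (fun T => ((⌈u / (-Real.log (c T))⌉₊ : ℝ)) / T) atTop (𝓝 (u / lam)) := by
      refine tendsto_of_tendsto_of_tendsto_of_le_of_le' hlow hhigh ?_ ?_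
      · filter_upwards [hTpos, hθpos] with T hT hθT
        rw [show u / (T * -Real.log (c T)) = (u / -Real.log (c T)) / T by
          rw [div_div]; ring_nf]
        gcongr
        exact Nat.le_ceil _
      · filter_upwards [hTpos, hθpos] with T hT hθT
        have hceil : ((⌈u / -Real.log (c T)⌉₊ : ℝ)) ≤ u / -Real.log (c T) + 1 :=
          (Nat.ceil_lt_add_one (by positivity)).le
        calc ((⌈u / -Real.log (c T)⌉₊ : ℝ)) / T ≤ (u / -Real.log (c T) + 1) / T := by gcongr
          _ = u / (T * -Real.log (c T)) + 1 / T := by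
              rw [add_div, div_div]; ring_nf
    have hae : ∀ᵐ ω ∂P, Tendsto
        (fun T => g ((1 / T) * ∑ i ∈ Finset.Icc 1 ⌈u / (-Real.log (c T))⌉₊, X i ω))
        atTop (𝓝 (g ((m / lam) * u))) := by
      filter_upwards [hslln] with ω hω
      have h1 : Tendsto (fun T => (∑ i ∈ Finset.Icc 1 ⌈u / (-Real.log (c T))⌉₊, X i ω)
          / (⌈u / (-Real.log (c T))⌉₊ : ℝ)) atTop (𝓝 m) := hω.comp hkinf
      have h2 := h1.mul hkT
      have heq : (fun T => (∑ i ∈ Finset.Icc 1 ⌈u / (-Real.log (c T))⌉₊, X i ω)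
            / (⌈u / (-Real.log (c T))⌉₊ : ℝ) * ((⌈u / (-Real.log (c T))⌉₊ : ℝ) / T))
          =ᶠ[atTop] fun T => (1 / T) * ∑ i ∈ Finset.Icc 1 ⌈u / (-Real.log (c T))⌉₊, X i ω := by
        filter_upwards [hTpos, hkinf.eventually_ge_atTop 1] with T hT hk
        have hkne : ((⌈u / (-Real.log (c T))⌉₊ : ℝ)) ≠ 0 := by
          have : (0:ℝ) < (⌈u / (-Real.log (c T))⌉₊ : ℝ) := by exact_mod_cast hk
          exact this.ne'
        field_simp
        exact mul_div_cancel_right₀ _ (by rw [← div_neg]; exact hkne)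
      have h3 := h2.congr' heq
      have hval : m * (u / lam) = (m / lam) * u := by ring
      rw [hval] at h3
      exact (hg.tendsto _).comp h3
    have hdct := tendsto_integral_filter_of_dominated_convergence (μ := P) (fun _ => C)
      (Eventually.of_forall fun T =>
        (hg.measurable.comp (measurable_const.mul
          (Finset.measurable_sum _ fun i _ => hXmeas i))).aestronglyMeasurable)
      (Eventually.of_forall fun T => ae_of_all _ fun ω => by
        simpa [Real.norm_eq_abs] using hC _)
      (integrable_const C) hae
    simpa using hdct
  -- identification of the prelimit expression
  have hEq : (fun T => ∫ ω, g ((1 / T) * ∑ i ∈ Finset.Icc 1 (I T ω), X i ω) ∂P)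
      =ᶠ[atTop] fun T => ∫ u in Set.Ioi (0:ℝ),
        (∫ ω, g ((1 / T) * ∑ i ∈ Finset.Icc 1 ⌈u / (-Real.log (c T))⌉₊, X i ω) ∂P)
          * Real.exp (-u) := by
    filter_upwards [hTpos] with T hT
    obtain ⟨hc0, hc1⟩ := hc T hT
    have habd : ∀ k : ℕ, |∫ ω, g ((1 / T) * ∑ i ∈ Finset.Icc 1 k, X i ω) ∂P| ≤ C := by
      intro k
      have h := norm_integral_le_of_norm_le_const (μ := P)
        (C := C) (f := fun ω => g ((1 / T) * ∑ i ∈ Finset.Icc 1 k, X i ω))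
        (ae_of_all _ fun ω => by simpa [Real.norm_eq_abs] using hC _)
      simpa [Real.norm_eq_abs] using h
    calc ∫ ω, g ((1 / T) * ∑ i ∈ Finset.Icc 1 (I T ω), X i ω) ∂P
        = ∑' k : ℕ, (P {ω | I T ω = k + 1}).toReal
            * ∫ ω, g ((1 / T) * ∑ i ∈ Finset.Icc 1 (k + 1), X i ω) ∂P :=
          stepA P X hXmeas (I T) (hImeas T) (hIpos T) (hIindep T) g hg C hC T
      _ = ∑' k : ℕ, ((1 - c T) * c T ^ k)
            * ∫ ω, g ((1 / T) * ∑ i ∈ Finset.Icc 1 (k + 1), X i ω) ∂P := by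
          refine tsum_congr fun k => ?_
          congr 1
          rw [hIlaw T hT (k + 1) (by omega)]
          rw [show k + 1 - 1 = k from rfl]
          exact ENNReal.toReal_ofReal
            (mul_nonneg (by linarith) (pow_nonneg hc0.le k))
      _ = ∫ u in Set.Ioi (0:ℝ),
            (∫ ω, g ((1 / T) * ∑ i ∈ Finset.Icc 1 ⌈u / (-Real.log (c T))⌉₊, X i ω) ∂P)
              * Real.exp (-u) :=
          (stepB (fun k => ∫ ω, g ((1 / T) * ∑ i ∈ Finset.Icc 1 k, X i ω) ∂P)
            C habd (c T) hc0 hc1).symm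
  -- limit of the integral representation
  have habd' : ∀ (k : ℕ) (T : ℝ), |∫ ω, g ((1 / T) * ∑ i ∈ Finset.Icc 1 k, X i ω) ∂P| ≤ C := by
    intro k T
    have h := norm_integral_le_of_norm_le_const (μ := P)
      (C := C) (f := fun ω => g ((1 / T) * ∑ i ∈ Finset.Icc 1 k, X i ω))
      (ae_of_all _ fun ω => by simpa [Real.norm_eq_abs] using hC _)
    simpa [Real.norm_eq_abs] using h
  have hboundint : IntegrableOn (fun u : ℝ => C * Real.exp (-u)) (Ioi (0:ℝ)) := by
    have h : IntegrableOn (fun x : ℝ => C * Real.exp (-1 * x)) (Ioi (0:ℝ)) :=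
      (exp_neg_integrableOn_Ioi (0:ℝ) (one_pos)).const_mul C
    exact h.congr_fun (fun x _ => by norm_num) measurableSet_Ioi
  have hLim : Tendsto (fun T => ∫ u in Set.Ioi (0:ℝ),
        (∫ ω, g ((1 / T) * ∑ i ∈ Finset.Icc 1 ⌈u / (-Real.log (c T))⌉₊, X i ω) ∂P)
          * Real.exp (-u)) atTop
      (𝓝 (∫ u in Set.Ioi (0:ℝ), g ((m / lam) * u) * Real.exp (-u))) := by
    refine tendsto_integral_filter_of_dominated_convergence (fun u => C * Real.exp (-u))
      (Eventually.of_forall fun T => ?_) (Eventually.of_forall fun T => ?_) hboundint ?_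
    · have hmeas1 : Measurable fun u : ℝ => (⌈u / (-Real.log (c T))⌉₊ : ℕ) :=
        Nat.measurable_ceil.comp (measurable_id.div_const _)
      have hmeas2 : Measurable fun n : ℕ =>
          ∫ ω, g ((1 / T) * ∑ i ∈ Finset.Icc 1 n, X i ω) ∂P := measurable_from_top
      exact ((hmeas2.comp hmeas1).mul
        (Real.continuous_exp.comp continuous_neg).measurable).aestronglyMeasurable
    · refine ae_of_all _ fun u => ?_
      rw [norm_mul, Real.norm_eq_abs, Real.norm_eq_abs, abs_of_pos (Real.exp_pos _)]
      exact mul_le_mul_of_nonneg_right (habd' _ _) (Real.exp_pos _).le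
    · rw [ae_restrict_iff' measurableSet_Ioi]
      exact ae_of_all _ fun u hu => ((hptw u hu).mul tendsto_const_nhds)
  -- identification of the limit
  have hTarget : ∫ u in Set.Ioi (0:ℝ), g ((m / lam) * u) * Real.exp (-u)
      = ∫ x in Set.Ioi (0:ℝ), g x * ((lam / m) * Real.exp (-(lam / m) * x)) := by
    have hb : 0 < lam / m := div_pos hlam hm
    have h := integral_comp_mul_left_Ioi (fun u => g ((m / lam) * u) * Real.exp (-u)) 0 hb
    rw [mul_zero] at h
    have hsimp : ∀ x : ℝ, g ((m / lam) * ((lam / m) * x)) * Real.exp (-((lam / m) * x))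
        = g x * Real.exp (-(lam / m) * x) := by
      intro x
      have hx : (m / lam) * ((lam / m) * x) = x := by field_simp
      rw [hx, neg_mul]
    calc ∫ u in Set.Ioi (0:ℝ), g ((m / lam) * u) * Real.exp (-u)
        = (lam / m) * ((lam / m)⁻¹ • ∫ u in Set.Ioi (0:ℝ), g ((m / lam) * u) * Real.exp (-u)) := by
          rw [smul_eq_mul, ← mul_assoc, mul_inv_cancel₀ hb.ne', one_mul]
      _ = (lam / m) * ∫ x in Set.Ioi (0:ℝ),
            g ((m / lam) * ((lam / m) * x)) * Real.exp (-((lam / m) * x)) := by rw [← h]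
      _ = (lam / m) * ∫ x in Set.Ioi (0:ℝ), g x * Real.exp (-(lam / m) * x) := by
          congr 1
          exact integral_congr_ae (ae_of_all _ fun x => hsimp x)
      _ = ∫ x in Set.Ioi (0:ℝ), g x * ((lam / m) * Real.exp (-(lam / m) * x)) := by
          rw [← integral_const_mul]
          exact integral_congr_ae (ae_of_all _ fun x => by ring)
  rw [← hTarget]
  exact hLim.congr' hEq.symm
end

section
/- Let φ : [0,∞) → [0,∞) be a measurable probability density with ∫_0^∞ φ(s) ds = 1 and finite positive mean m = ∫_0^∞ s φ(s) ds ∈ (0,∞), and let φ̂(z) = ∫_0^∞ e^{izs} φ(s) ds. Let (c_T)_{T>0} satisfy 0 < c_T < 1 and lim_{T→∞} T(1 − c_T) = λ for a fixed λ > 0. Then for every z ∈ ℝ, lim_{T→∞} (1 − c_T) φ̂(z/T) / (1 − c_T φ̂(z/T)) = 1 / (1 − i (m/λ) z). -/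
open MeasureTheory Filter Topology

theorem stmt6
    (φ : ℝ → ℝ) (hφmeas : Measurable φ) (hφnonneg : ∀ s, 0 ≤ φ s)
    (hφneg : ∀ s < (0:ℝ), φ s = 0)
    (hφint : IntegrableOn φ (Set.Ioi 0))
    (hφ1 : ∫ s in Set.Ioi (0:ℝ), φ s = 1)
    (m : ℝ) (hm : 0 < m)
    (hmint : IntegrableOn (fun s => s * φ s) (Set.Ioi 0))
    (hmval : ∫ s in Set.Ioi (0:ℝ), s * φ s = m)
    -- the characteristic function φ̂(z) = ∫_0^∞ e^{izs} φ(s) ds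
    (φhat : ℝ → ℂ)
    (hφhat : ∀ z : ℝ,
      φhat z = ∫ s in Set.Ioi (0:ℝ), Complex.exp (Complex.I * z * s) * (φ s : ℂ))
    (c : ℝ → ℝ) (hc : ∀ T > 0, 0 < c T ∧ c T < 1)
    (lam : ℝ) (hlam : 0 < lam)
    (hclim : Tendsto (fun T => T * (1 - c T)) atTop (𝓝 lam)) :
    ∀ z : ℝ,
      Tendsto
        (fun T => ((1 - c T : ℝ) : ℂ) * φhat (z / T) / (1 - (c T : ℂ) * φhat (z / T)))
        atTop
        (𝓝 (1 / (1 - Complex.I * ((m / lam : ℝ) : ℂ) * (z : ℂ)))) := by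
  intro z
  set μ := volume.restrict (Set.Ioi (0:ℝ)) with hμ
  -- the parametrized integrand and its derivative
  set F : ℝ → ℝ → ℂ := fun x s => Complex.exp (Complex.I * x * s) * (φ s : ℂ) with hF
  set F' : ℝ → ℝ → ℂ := fun x s => (Complex.I * s) * Complex.exp (Complex.I * x * s) * (φ s : ℂ)
    with hF'
  have hFmeas : ∀ x : ℝ, AEStronglyMeasurable (F x) μ := by
    intro x
    exact ((Complex.measurable_exp.comp
      ((Complex.measurable_ofReal).const_mul (Complex.I * x))).mul
      (Complex.measurable_ofReal.comp hφmeas)).aestronglyMeasurable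
  have hφC : Integrable (fun s => ((φ s : ℂ))) μ := hφint.ofReal
  have hFint : Integrable (F 0) μ := by
    have : F 0 = fun s => ((φ s : ℂ)) := by
      funext s; simp [hF]
    rw [this]; exact hφC
  have hF'meas : AEStronglyMeasurable (F' 0) μ := by
    refine Measurable.aestronglyMeasurable ?_
    exact ((Complex.measurable_ofReal.const_mul Complex.I).mul
      (Complex.measurable_exp.comp
        ((Complex.measurable_ofReal).const_mul (Complex.I * (0:ℝ))))).mul
      (Complex.measurable_ofReal.comp hφmeas)
  have hbound : ∀ᵐ s ∂μ, ∀ x ∈ Metric.ball (0:ℝ) 1, ‖F' x s‖ ≤ s * φ s := by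
    filter_upwards [ae_restrict_mem measurableSet_Ioi] with s hs x _
    have hs0 : (0:ℝ) < s := hs
    have hexp : ‖Complex.exp (Complex.I * x * s)‖ = 1 := by
      rw [Complex.norm_exp]
      simp [Complex.mul_re]
    rw [hF']
    simp only [norm_mul, hexp, map_mul, Complex.norm_I,
      Complex.norm_real, Real.norm_eq_abs, mul_one, one_mul]
    rw [abs_of_pos hs0, abs_of_nonneg (hφnonneg s)]
  have hdiff : ∀ᵐ s ∂μ, ∀ x ∈ Metric.ball (0:ℝ) 1, HasDerivAt (F · s) (F' x s) x := by
    refine Eventually.of_forall fun s => fun x _ => ?_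
    have h1 : HasDerivAt (fun x : ℝ => (x:ℂ)) 1 x := by
      simpa using (hasDerivAt_id x).ofReal_comp
    have h2 : HasDerivAt (fun x : ℝ => Complex.I * x * (s:ℂ)) (Complex.I * s) x := by
      have := (h1.const_mul Complex.I).mul_const (s:ℂ)
      simpa [mul_comm, mul_assoc] using this
    have h3 := h2.cexp
    have h4 := h3.mul_const ((φ s : ℂ))
    convert h4 using 1
    show Complex.I * (s:ℂ) * Complex.exp (Complex.I * x * s) * (φ s : ℂ) = _
    ring
    rfl
  have key := hasDerivAt_integral_of_dominated_loc_of_deriv_le (μ := μ)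
    (F := F) (F' := F') (x₀ := (0:ℝ)) (bound := fun s => s * φ s)
    (Metric.ball_mem_nhds 0 one_pos) (Eventually.of_forall hFmeas) hFint hF'meas hbound hmint hdiff
  -- identify the integral function with φhat
  have hφhat_eq : (fun x => ∫ s, F x s ∂μ) = φhat := by
    funext x; rw [hφhat x]
  have hder_val : (∫ s, F' 0 s ∂μ) = Complex.I * m := by
    have h1 : (fun s => F' 0 s) = fun s => Complex.I * ((s * φ s : ℝ) : ℂ) := by
      funext s; simp [hF']; push_cast; ring
    rw [h1, integral_const_mul]
    congr 1
    rw [← hmval]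
    exact integral_ofReal
  have hD : HasDerivAt φhat (Complex.I * m) 0 := by
    rw [← hφhat_eq, ← hder_val]; exact key.2
  have hφhat0 : φhat 0 = 1 := by
    rw [hφhat 0]
    have : (fun s : ℝ => Complex.exp (Complex.I * (0:ℝ) * s) * (φ s : ℂ))
        = fun s : ℝ => ((φ s : ℝ) : ℂ) := by
      funext s; simp
    have h2 : ∫ (s:ℝ), ((φ s : ℂ)) ∂μ = ((∫ s, φ s ∂μ : ℝ) : ℂ) := integral_ofReal
    rw [this, h2, hφ1]
    norm_num
  -- z/T → 0
  have hzT : Tendsto (fun T : ℝ => z / T) atTop (𝓝 0) := by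
    simpa [div_eq_mul_inv] using tendsto_inv_atTop_zero.const_mul z
  have hφhatT : Tendsto (fun T : ℝ => φhat (z / T)) atTop (𝓝 1) := by
    have := (hD.continuousAt.tendsto).comp hzT
    rwa [hφhat0] at this
  -- c T → 1
  have hc1 : Tendsto (fun T : ℝ => 1 - c T) atTop (𝓝 0) := by
    have h := hclim.mul tendsto_inv_atTop_zero
    rw [mul_zero] at h
    refine h.congr' ?_
    filter_upwards [eventually_gt_atTop (0:ℝ)] with T hT
    field_simp
  have hcT : Tendsto (fun T : ℝ => ((c T : ℝ) : ℂ)) atTop (𝓝 1) := by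
    have : Tendsto (fun T : ℝ => c T) atTop (𝓝 1) := by
      have h : Tendsto (fun T : ℝ => 1 - (1 - c T)) atTop (𝓝 (1 - 0)) :=
        tendsto_const_nhds.sub hc1
      simpa using h
    have := (Complex.continuous_ofReal.tendsto 1).comp this
    exact this
  -- T * (1 - φhat (z/T)) → - I m z
  set G : ℝ → ℂ := fun T => (T:ℂ) * (1 - φhat (z / T)) with hG
  have hGlim : Tendsto G atTop (𝓝 (-(Complex.I * m * z))) := by
    rcases eq_or_ne z 0 with hz | hz
    · have : G = fun _ => 0 := by
        funext T; simp [hG, hz, hφhat0]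
      rw [this, hz]
      simpa using tendsto_const_nhds
    · have hslope : Tendsto (slope φhat 0) (𝓝[≠] 0) (𝓝 (Complex.I * m)) :=
        hasDerivAt_iff_tendsto_slope.mp hD
      have hcomp : Tendsto (fun T : ℝ => z / T) atTop (𝓝[≠] (0:ℝ)) := by
        rw [tendsto_nhdsWithin_iff]
        refine ⟨hzT, ?_⟩
        filter_upwards [eventually_gt_atTop (0:ℝ)] with T hT
        exact div_ne_zero hz (ne_of_gt hT)
      have h2 : Tendsto (fun T : ℝ => (-z) • slope φhat 0 (z / T)) atTop
          (𝓝 ((-z) • (Complex.I * m))) := (hslope.comp hcomp).const_smul (-z)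
      have heq : ∀ᶠ T in atTop, (-z) • slope φhat 0 (z / T) = G T := by
        filter_upwards [eventually_gt_atTop (0:ℝ)] with T hT
        rw [slope_def_module, hφhat0, hG]
        simp only [sub_zero, Complex.real_smul, smul_smul]
        push_cast
        have hT0 : (T:ℂ) ≠ 0 := by exact_mod_cast ne_of_gt hT
        have hz0 : (z:ℂ) ≠ 0 := by exact_mod_cast hz
        rw [show ((z:ℂ)/T)⁻¹ = (T:ℂ)/z by rw [inv_div]]
        field_simp
        ring
      have := h2.congr' heq
      convert this using 2
      rw [Complex.real_smul]
      push_cast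
      ring
  -- numerator and denominator scaled by T
  set L : ℂ := (lam:ℂ) - Complex.I * m * z with hL
  have hclimC : Tendsto (fun T : ℝ => ((T * (1 - c T) : ℝ) : ℂ)) atTop (𝓝 (lam:ℂ)) := by
    exact (Complex.continuous_ofReal.tendsto lam).comp hclim
  have hNlim : Tendsto (fun T : ℝ => ((T * (1 - c T) : ℝ) : ℂ) * φhat (z / T)) atTop
      (𝓝 (lam:ℂ)) := by
    have := hclimC.mul hφhatT
    simpa using this
  have hDlim : Tendsto (fun T : ℝ => (T:ℂ) * (1 - (c T : ℂ) * φhat (z / T))) atTop (𝓝 L) := by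
    have h := hclimC.add (hcT.mul hGlim)
    have heq : (fun T : ℝ => ((T * (1 - c T) : ℝ) : ℂ) + (c T : ℂ) * G T)
        = fun T : ℝ => (T:ℂ) * (1 - (c T : ℂ) * φhat (z / T)) := by
      funext T; rw [hG]; push_cast; ring
    rw [heq] at h
    convert h using 2
    rw [hL]; ring
  have hL0 : L ≠ 0 := by
    rw [hL]
    intro h
    have := congrArg Complex.re h
    simp [Complex.mul_re, Complex.sub_re] at this
    linarith
  have hfin := hNlim.div hDlim hL0
  have heq2 : ∀ᶠ T in atTop, ((T * (1 - c T) : ℝ) : ℂ) * φhat (z / T) /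
      ((T:ℂ) * (1 - (c T : ℂ) * φhat (z / T)))
      = ((1 - c T : ℝ) : ℂ) * φhat (z / T) / (1 - (c T : ℂ) * φhat (z / T)) := by
    filter_upwards [eventually_gt_atTop (0:ℝ)] with T hT
    have hT0 : (T:ℂ) ≠ 0 := by exact_mod_cast ne_of_gt hT
    push_cast
    rw [mul_assoc]
    exact mul_div_mul_left _ _ hT0
  have := hfin.congr' heq2
  convert this using 2
  rw [hL]
  have h1 : ((1:ℂ) - Complex.I * ((m / lam : ℝ) : ℂ) * z) ≠ 0 := by
    intro h
    have := congrArg Complex.re h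
    simp [Complex.mul_re, Complex.sub_re] at this
  have hlam0 : ((lam:ℝ):ℂ) ≠ 0 := by exact_mod_cast ne_of_gt hlam
  rw [div_eq_div_iff h1 (by rw [← hL]; exact hL0)]
  push_cast
  field_simp
end

section
/- Let φ : [0,∞) → [0,∞) be a measurable probability density with ∫_0^∞ φ(s) ds = 1 and finite positive mean m = ∫_0^∞ s φ(s) ds ∈ (0,∞). Let (a_T)_{T>0} satisfy a_T > 1 for all T and lim_{T→∞} a_T = 1, and for each T let b_T > 0 satisfy ∫_0^∞ e^{−b_T s} a_T φ(s) ds = 1/a_T. Then lim_{T→∞} b_T = 0 and lim_{T→∞} (a_T − 1/a_T)/b_T = m. -/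
open MeasureTheory Filter Topology

lemma aux_int (φ : ℝ → ℝ) (hφmeas : Measurable φ)
    (hφint : IntegrableOn φ (Set.Ioi 0)) (c : ℝ) (hc : 0 ≤ c) :
    IntegrableOn (fun s => Real.exp (-c * s) * φ s) (Set.Ioi 0) := by
  refine Integrable.mono hφint ?_ ?_
  · exact ((Real.measurable_exp.comp (measurable_const.mul measurable_id)).mul
      hφmeas).aestronglyMeasurable
  · refine (ae_restrict_iff' measurableSet_Ioi).2 (Filter.Eventually.of_forall fun s hs => ?_)
    have h1 : Real.exp (-c * s) ≤ 1 := by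
      rw [Real.exp_le_one_iff]
      have : (0:ℝ) < s := hs
      nlinarith
    rw [Real.norm_eq_abs, Real.norm_eq_abs, abs_mul, abs_of_nonneg (Real.exp_pos _).le]
    nlinarith [abs_nonneg (φ s), Real.exp_pos (-c*s)]

lemma aux_lt (φ : ℝ → ℝ) (hφmeas : Measurable φ) (hφnonneg : ∀ s, 0 ≤ φ s)
    (hφint : IntegrableOn φ (Set.Ioi 0))
    (hφ1 : ∫ s in Set.Ioi (0:ℝ), φ s = 1)
    (m : ℝ) (hm : 0 < m)
    (hmval : ∫ s in Set.Ioi (0:ℝ), s * φ s = m)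
    (ε : ℝ) (hε : 0 < ε) :
    ∫ s in Set.Ioi (0:ℝ), Real.exp (-ε * s) * φ s < 1 := by
  have hint := aux_int φ hφmeas hφint ε hε.le
  have hsub : IntegrableOn (fun s => (1 - Real.exp (-ε * s)) * φ s) (Set.Ioi 0) := by
    have h := hφint.sub hint
    exact h.congr (Filter.Eventually.of_forall fun s => by simp [Pi.sub_apply]; ring)
  have hnn : 0 ≤ᵐ[volume.restrict (Set.Ioi 0)] fun s => (1 - Real.exp (-ε * s)) * φ s := by
    refine (ae_restrict_iff' measurableSet_Ioi).2 (Filter.Eventually.of_forall fun s hs => ?_)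
    have hs' : (0:ℝ) < s := hs
    have h1 : Real.exp (-ε * s) ≤ 1 := by rw [Real.exp_le_one_iff]; nlinarith
    have h2 := hφnonneg s
    show (0:ℝ) ≤ (1 - Real.exp (-ε * s)) * φ s
    nlinarith
  have hval : ∫ s in Set.Ioi (0:ℝ), (1 - Real.exp (-ε * s)) * φ s
      = 1 - ∫ s in Set.Ioi (0:ℝ), Real.exp (-ε * s) * φ s := by
    have h : ∫ s in Set.Ioi (0:ℝ), (1 - Real.exp (-ε * s)) * φ s
        = (∫ s in Set.Ioi (0:ℝ), φ s) - ∫ s in Set.Ioi (0:ℝ), Real.exp (-ε * s) * φ s := by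
      rw [← integral_sub hφint hint]
      congr 1; funext s; ring
    rw [h, hφ1]
  have hpos : 0 < ∫ s in Set.Ioi (0:ℝ), (1 - Real.exp (-ε * s)) * φ s := by
    rcases lt_or_eq_of_le (integral_nonneg_of_ae hnn) with h | h
    · exact h
    · exfalso
      have hz : (fun s => (1 - Real.exp (-ε * s)) * φ s)
          =ᵐ[volume.restrict (Set.Ioi 0)] 0 :=
        (integral_eq_zero_iff_of_nonneg_ae hnn hsub).1 h.symm
      have hmz : (fun s => s * φ s) =ᵐ[volume.restrict (Set.Ioi 0)] 0 := by
        filter_upwards [hz, ae_restrict_mem measurableSet_Ioi] with s h1 h2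
        have hs' : (0:ℝ) < s := h2
        have hlt : Real.exp (-ε * s) < 1 := by rw [Real.exp_lt_one_iff]; nlinarith
        have hφ0 : φ s = 0 := by
          by_contra hne
          have : 0 < φ s := lt_of_le_of_ne (hφnonneg s) (Ne.symm hne)
          have : 0 < (1 - Real.exp (-ε * s)) * φ s := by nlinarith
          simp only [Pi.zero_apply] at h1
          linarith
        simp [hφ0]
      have : m = 0 := by
        rw [← hmval]
        rw [integral_congr_ae hmz]
        simp
      linarith
  linarith [hval ▸ hpos]

lemma aux_G (φ : ℝ → ℝ) (hφmeas : Measurable φ) (hφnonneg : ∀ s, 0 ≤ φ s)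
    (m : ℝ)
    (hmint : IntegrableOn (fun s => s * φ s) (Set.Ioi 0))
    (hmval : ∫ s in Set.Ioi (0:ℝ), s * φ s = m) :
    Tendsto (fun β => ∫ s in Set.Ioi (0:ℝ), ((1 - Real.exp (-β * s))/β) * φ s)
      (𝓝[>] (0:ℝ)) (𝓝 m) := by
  rw [← hmval]
  apply tendsto_integral_filter_of_dominated_convergence (fun s => s * φ s)
  · refine Filter.Eventually.of_forall fun β => ?_
    exact (((measurable_const.sub (Real.measurable_exp.comp
      (measurable_const.mul measurable_id))).div_const β).mul hφmeas).aestronglyMeasurable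
  · filter_upwards [self_mem_nhdsWithin] with β (hβ : (0:ℝ) < β)
    refine (ae_restrict_iff' measurableSet_Ioi).2 (Filter.Eventually.of_forall fun s hs => ?_)
    have hs' : (0:ℝ) < s := hs
    have hle : 1 - Real.exp (-β * s) ≤ β * s := by
      have := Real.add_one_le_exp (-β * s)
      linarith
    have hnn : 0 ≤ 1 - Real.exp (-β * s) := by
      have : Real.exp (-β * s) ≤ 1 := by rw [Real.exp_le_one_iff]; nlinarith
      linarith
    have hdiv : (1 - Real.exp (-β * s))/β ≤ s := by
      rw [div_le_iff₀ hβ]; nlinarith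
    rw [Real.norm_eq_abs, abs_mul, abs_of_nonneg (div_nonneg hnn hβ.le),
      abs_of_nonneg (hφnonneg s)]
    exact mul_le_mul_of_nonneg_right hdiv (hφnonneg s)
  · exact hmint
  · refine (ae_restrict_iff' measurableSet_Ioi).2 (Filter.Eventually.of_forall fun s hs => ?_)
    have hd : HasDerivAt (fun β : ℝ => 1 - Real.exp (-β * s)) s 0 := by
      have h1 : HasDerivAt (fun β : ℝ => -β * s) (-s) 0 := by
        simpa using ((hasDerivAt_id (0:ℝ)).neg.mul_const s)
      have h2 := h1.exp
      have h3 := h2.const_sub 1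
      simpa using h3
    rw [hasDerivAt_iff_tendsto_slope] at hd
    have hmono : 𝓝[>] (0:ℝ) ≤ 𝓝[≠] (0:ℝ) :=
      nhdsWithin_mono _ fun x hx => ne_of_gt hx
    have h4 : Tendsto (fun β : ℝ => (1 - Real.exp (-β * s))/β) (𝓝[>] (0:ℝ)) (𝓝 s) := by
      refine (hd.mono_left hmono).congr' ?_
      filter_upwards [self_mem_nhdsWithin] with β (hβ : (0:ℝ) < β)
      simp [slope_def_field]
    exact h4.mul_const (φ s)

theorem stmt8
    (φ : ℝ → ℝ) (hφmeas : Measurable φ) (hφnonneg : ∀ s, 0 ≤ φ s)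
    (hφneg : ∀ s < (0:ℝ), φ s = 0)
    (hφint : IntegrableOn φ (Set.Ioi 0))
    (hφ1 : ∫ s in Set.Ioi (0:ℝ), φ s = 1)
    (m : ℝ) (hm : 0 < m)
    (hmint : IntegrableOn (fun s => s * φ s) (Set.Ioi 0))
    (hmval : ∫ s in Set.Ioi (0:ℝ), s * φ s = m)
    (a : ℝ → ℝ) (ha : ∀ T > 0, 1 < a T)
    (halim : Tendsto a atTop (𝓝 1))
    (b : ℝ → ℝ) (hb : ∀ T > 0, 0 < b T)
    (hbeq : ∀ T > 0,
      ∫ s in Set.Ioi (0:ℝ), Real.exp (-(b T) * s) * (a T * φ s) = 1 / a T) :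
    Tendsto b atTop (𝓝 0) ∧
      Tendsto (fun T => (a T - 1 / a T) / b T) atTop (𝓝 m) := by
  set F : ℝ → ℝ := fun β => ∫ s in Set.Ioi (0:ℝ), Real.exp (-β * s) * φ s with hFdef
  -- F (b T) = 1 / (a T)^2 and 1 / a T = a T * F (b T)
  have hFb : ∀ T > 0, a T * F (b T) = 1 / a T := by
    intro T hT
    have h := hbeq T hT
    have : ∫ s in Set.Ioi (0:ℝ), Real.exp (-(b T) * s) * (a T * φ s)
        = a T * F (b T) := by
      rw [hFdef, ← integral_const_mul]
      congr 1; funext s; ring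
    rw [this] at h; exact h
  have hFb2 : ∀ T > 0, F (b T) = 1 / (a T)^2 := by
    intro T hT
    have h := hFb T hT
    have haT : a T ≠ 0 := by have := ha T hT; linarith
    field_simp at h ⊢
    nlinarith [h]
  -- monotonicity of F
  have hFmono : ∀ ε β : ℝ, 0 < ε → ε ≤ β → F β ≤ F ε := by
    intro ε β hε hεβ
    refine setIntegral_mono_on (aux_int φ hφmeas hφint β (by linarith))
      (aux_int φ hφmeas hφint ε hε.le) measurableSet_Ioi (fun s hs => ?_)
    have hs' : (0:ℝ) < s := hs
    have : Real.exp (-β * s) ≤ Real.exp (-ε * s) := by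
      apply Real.exp_le_exp.2; nlinarith
    exact mul_le_mul_of_nonneg_right this (hφnonneg s)
  -- F (b T) → 1
  have hFtend : Tendsto (fun T => F (b T)) atTop (𝓝 1) := by
    have h1 : Tendsto (fun T => 1 / (a T)^2) atTop (𝓝 (1/1^2)) :=
      tendsto_const_nhds.div (halim.pow 2) (by norm_num)
    have h2 : Tendsto (fun T => 1 / (a T)^2) atTop (𝓝 1) := by simpa using h1
    refine h2.congr' ?_
    filter_upwards [eventually_gt_atTop (0:ℝ)] with T hT
    exact (hFb2 T hT).symm
  -- b T → 0
  have hb0 : Tendsto b atTop (𝓝 0) := by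
    rw [tendsto_order]
    constructor
    · intro c hc
      filter_upwards [eventually_gt_atTop (0:ℝ)] with T hT
      exact lt_trans hc (hb T hT)
    · intro c hc
      have hFc : F c < 1 := aux_lt φ hφmeas hφnonneg hφint hφ1 m hm hmval c hc
      have hev : ∀ᶠ T in atTop, F c < F (b T) := hFtend.eventually (eventually_gt_nhds hFc)
      filter_upwards [hev, eventually_gt_atTop (0:ℝ)] with T h1 hT
      by_contra hcb
      push_neg at hcb
      exact absurd (hFmono c (b T) hc hcb) (not_le.2 h1)
  refine ⟨hb0, ?_⟩
  -- G composition
  have hbpos : Tendsto b atTop (𝓝[>] (0:ℝ)) := by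
    rw [tendsto_nhdsWithin_iff]
    refine ⟨hb0, ?_⟩
    filter_upwards [eventually_gt_atTop (0:ℝ)] with T hT
    exact hb T hT
  have hG := (aux_G φ hφmeas hφnonneg m hmint hmval).comp hbpos
  have hfin : Tendsto (fun T => a T *
      ∫ s in Set.Ioi (0:ℝ), ((1 - Real.exp (-(b T) * s))/(b T)) * φ s) atTop (𝓝 (1 * m)) :=
    halim.mul hG
  rw [one_mul] at hfin
  refine hfin.congr' ?_
  filter_upwards [eventually_gt_atTop (0:ℝ)] with T hT
  have hbT := hb T hT
  have haT : a T ≠ 0 := by have := ha T hT; linarith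
  -- G (b T) = (1 - F (b T)) / b T
  have hGF : (∫ s in Set.Ioi (0:ℝ), ((1 - Real.exp (-(b T) * s))/(b T)) * φ s)
      = (1 - F (b T)) / b T := by
    have h1 : (∫ s in Set.Ioi (0:ℝ), ((1 - Real.exp (-(b T) * s))/(b T)) * φ s)
        = ∫ s in Set.Ioi (0:ℝ), ((1 - Real.exp (-(b T) * s)) * φ s) / b T := by
      congr 1; funext s; ring
    have h2 : (∫ s in Set.Ioi (0:ℝ), ((1 - Real.exp (-(b T) * s)) * φ s) / b T)
        = (∫ s in Set.Ioi (0:ℝ), (1 - Real.exp (-(b T) * s)) * φ s) / b T :=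
      integral_div _ _
    have h3 : (∫ s in Set.Ioi (0:ℝ), (1 - Real.exp (-(b T) * s)) * φ s)
        = (∫ s in Set.Ioi (0:ℝ), φ s) - F (b T) := by
      rw [hFdef, ← integral_sub hφint (aux_int φ hφmeas hφint (b T) hbT.le)]
      congr 1; funext s; ring
    rw [h1, h2, h3, hφ1]
  rw [hGF]
  have h4 : 1 / a T = a T * F (b T) := (hFb T hT).symm
  rw [h4]
  field_simp
end

section
/- Let φ : [0,∞) → [0,∞) be a measurable probability density with ∫_0^∞ φ(s) ds = 1 and finite positive mean m = ∫_0^∞ s φ(s) ds ∈ (0,∞). Let (a_T)_{T>0} satisfy a_T > 1 for all T and lim_{T→∞} T(a_T − 1) = λ for a fixed λ > 0, and for each T let b_T > 0 satisfy ∫_0^∞ e^{−b_T s} a_T φ(s) ds = 1/a_T. Then lim_{T→∞} T b_T = 2λ/m. -/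
open MeasureTheory Filter Topology

lemma aux_key1 (x : ℝ) : x * Real.exp (-x) ≤ 1 - Real.exp (-x) := by
  have h := Real.add_one_le_exp x
  have h3 : Real.exp x * Real.exp (-x) = 1 := by rw [← Real.exp_add]; simp
  nlinarith [Real.exp_pos (-x), mul_le_mul_of_nonneg_right h (Real.exp_pos (-x)).le]

lemma aux_key2 (x : ℝ) : 1 - Real.exp (-x) ≤ x := by
  have h := Real.add_one_le_exp (-x); linarith

lemma aux_key3 (ε s : ℝ) (hε : 0 < ε) (hs : 0 < s) :
    ε * Real.exp (-ε) * min s 1 ≤ 1 - Real.exp (-(ε * s)) := by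
  rcases le_total s 1 with h1 | h1
  · rw [min_eq_left h1]
    have e1 : Real.exp (-ε) ≤ Real.exp (-(ε * s)) := by
      apply Real.exp_le_exp.2; nlinarith
    have := aux_key1 (ε * s)
    nlinarith [Real.exp_pos (-(ε * s)),
      mul_le_mul_of_nonneg_left e1 (by positivity : (0:ℝ) ≤ ε * s)]
  · rw [min_eq_right h1]
    have e1 : Real.exp (-(ε * s)) ≤ Real.exp (-ε) := by
      apply Real.exp_le_exp.2; nlinarith
    have := aux_key1 ε
    nlinarith

theorem stmt9
    (φ : ℝ → ℝ) (hφmeas : Measurable φ) (hφnonneg : ∀ s, 0 ≤ φ s)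
    (hφneg : ∀ s < (0:ℝ), φ s = 0)
    (hφint : IntegrableOn φ (Set.Ioi 0))
    (hφ1 : ∫ s in Set.Ioi (0:ℝ), φ s = 1)
    (m : ℝ) (hm : 0 < m)
    (hmint : IntegrableOn (fun s => s * φ s) (Set.Ioi 0))
    (hmval : ∫ s in Set.Ioi (0:ℝ), s * φ s = m)
    (a : ℝ → ℝ) (ha : ∀ T > 0, 1 < a T)
    (lam : ℝ) (hlam : 0 < lam)
    (halim : Tendsto (fun T => T * (a T - 1)) atTop (𝓝 lam))
    (b : ℝ → ℝ) (hb : ∀ T > 0, 0 < b T)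
    (hbeq : ∀ T > 0,
      ∫ s in Set.Ioi (0:ℝ), Real.exp (-(b T) * s) * (a T * φ s) = 1 / a T) :
    Tendsto (fun T => T * b T) atTop (𝓝 (2 * lam / m)) := by
  -- integrability lemmas
  have hexpint : ∀ c : ℝ, 0 ≤ c →
      IntegrableOn (fun s => Real.exp (-c * s) * φ s) (Set.Ioi 0) := by
    intro c hc
    apply Integrable.mono hφint
    · exact ((((measurable_id.const_mul (-c)).exp).mul hφmeas)).aestronglyMeasurable
    · rw [ae_restrict_iff' measurableSet_Ioi]
      filter_upwards with s hs
      have h1 : Real.exp (-c * s) ≤ 1 := Real.exp_le_one_iff.2 (by nlinarith [(show (0:ℝ) < s from hs).le])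
      rw [Real.norm_eq_abs, Real.norm_eq_abs,
        abs_of_nonneg (mul_nonneg (Real.exp_pos _).le (hφnonneg s)),
        abs_of_nonneg (hφnonneg s)]
      nlinarith [mul_le_mul_of_nonneg_right h1 (hφnonneg s)]
  have hsint : ∀ c : ℝ, 0 ≤ c →
      IntegrableOn (fun s => s * Real.exp (-c * s) * φ s) (Set.Ioi 0) := by
    intro c hc
    apply Integrable.mono hmint
    · exact ((measurable_id.mul ((measurable_id.const_mul (-c)).exp)).mul
        hφmeas).aestronglyMeasurable
    · rw [ae_restrict_iff' measurableSet_Ioi]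
      filter_upwards with s hs
      have hs0 : (0:ℝ) < s := hs
      have h1 : Real.exp (-c * s) ≤ 1 := Real.exp_le_one_iff.2 (by nlinarith)
      rw [Real.norm_eq_abs, Real.norm_eq_abs,
        abs_of_nonneg (mul_nonneg (mul_nonneg hs0.le (Real.exp_pos _).le) (hφnonneg s)),
        abs_of_nonneg (mul_nonneg hs0.le (hφnonneg s))]
      nlinarith [mul_le_mul_of_nonneg_right
        (mul_le_mul_of_nonneg_left h1 hs0.le) (hφnonneg s)]
  have hminint : IntegrableOn (fun s => min s 1 * φ s) (Set.Ioi 0) := by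
    apply Integrable.mono hφint
    · exact ((measurable_id.min measurable_const).mul hφmeas).aestronglyMeasurable
    · rw [ae_restrict_iff' measurableSet_Ioi]
      filter_upwards with s hs
      have hs0 : (0:ℝ) < s := hs
      have h1 : (0:ℝ) ≤ min s 1 := le_min hs0.le zero_le_one
      have h2 : min s 1 ≤ 1 := min_le_right _ _
      rw [Real.norm_eq_abs, Real.norm_eq_abs, abs_of_nonneg (mul_nonneg h1 (hφnonneg s)),
        abs_of_nonneg (hφnonneg s)]
      nlinarith [hφnonneg s]
  -- I > 0
  set I : ℝ := ∫ s in Set.Ioi (0:ℝ), min s 1 * φ s with hIdef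
  have hI : 0 < I := by
    rcases lt_or_eq_of_le (setIntegral_nonneg measurableSet_Ioi
      (fun s hs => mul_nonneg (le_min (le_of_lt hs) zero_le_one) (hφnonneg s))) with h | h
    · exact h
    · exfalso
      have h0 : (fun s => min s 1 * φ s) =ᵐ[volume.restrict (Set.Ioi 0)] 0 := by
        rw [← integral_eq_zero_iff_of_nonneg_ae _ hminint]
        · exact h.symm
        · rw [EventuallyLE, ae_restrict_iff' measurableSet_Ioi]
          filter_upwards with s
          intro hs
          simpa using mul_nonneg (le_min (le_of_lt hs) zero_le_one) (hφnonneg s)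
      have h1 : (fun s => s * φ s) =ᵐ[volume.restrict (Set.Ioi 0)] 0 := by
        filter_upwards [h0, ae_restrict_mem measurableSet_Ioi] with s h2 h3
        have hs0 : (0:ℝ) < s := h3
        have hmin : (0:ℝ) < min s 1 := lt_min hs0 zero_lt_one
        have hz : min s 1 * φ s = 0 := by simpa using h2
        have : φ s = 0 := by
          rcases mul_eq_zero.1 hz with h | h
          · exact absurd h hmin.ne'
          · exact h
        simp [this]
      have : m = 0 := by
        rw [← hmval, integral_congr_ae h1]; simp
      linarith
  -- a T → 1
  have haT1 : Tendsto a atTop (𝓝 1) := by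
    have h0 : Tendsto (fun T : ℝ => T * (a T - 1) * T⁻¹) atTop (𝓝 (lam * 0)) :=
      halim.mul tendsto_inv_atTop_zero
    rw [mul_zero] at h0
    have h1 : Tendsto (fun T => a T - 1) atTop (𝓝 0) := by
      apply h0.congr'
      filter_upwards [eventually_gt_atTop (0:ℝ)] with T hT
      field_simp
    have := h1.add (tendsto_const_nhds (x := (1:ℝ)))
    simpa using this
  -- the Laplace transform identity
  have hLbT : ∀ T > 0, (∫ s in Set.Ioi (0:ℝ), Real.exp (-(b T) * s) * φ s) = 1 / (a T)^2 := by
    intro T hT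
    have ha1 := ha T hT
    have ha0 : a T ≠ 0 := by linarith
    have h := hbeq T hT
    have h2 : ∫ s in Set.Ioi (0:ℝ), Real.exp (-(b T) * s) * (a T * φ s)
        = a T * ∫ s in Set.Ioi (0:ℝ), Real.exp (-(b T) * s) * φ s := by
      rw [← integral_const_mul]
      congr 1; funext s; ring
    rw [h2] at h
    field_simp at h ⊢
    nlinarith [h]
  -- upper bound for 1 - 1/a^2
  have hupper : ∀ T > 0, 1 - 1/(a T)^2 ≤ b T * m := by
    intro T hT
    have hbT := hb T hT
    have h1 : (∫ s in Set.Ioi (0:ℝ), (φ s - Real.exp (-(b T) * s) * φ s))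
        = 1 - 1/(a T)^2 := by
      rw [integral_sub hφint (hexpint (b T) hbT.le), hφ1, hLbT T hT]
    have h2 : (∫ s in Set.Ioi (0:ℝ), (φ s - Real.exp (-(b T) * s) * φ s))
        ≤ ∫ s in Set.Ioi (0:ℝ), b T * (s * φ s) := by
      apply setIntegral_mono_on (hφint.sub (hexpint (b T) hbT.le))
        (hmint.const_mul (b T)) measurableSet_Ioi
      intro s hs
      have hs0 : (0:ℝ) < s := hs
      have hkey := aux_key2 (b T * s)
      rw [← neg_mul] at hkey
      simp only [Pi.sub_apply]
      nlinarith [hφnonneg s]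
    rw [integral_const_mul, hmval] at h2
    linarith [h1 ▸ h2]
  -- lower bound
  have hlower : ∀ T > 0,
      b T * (∫ s in Set.Ioi (0:ℝ), s * Real.exp (-(b T) * s) * φ s) ≤ 1 - 1/(a T)^2 := by
    intro T hT
    have hbT := hb T hT
    have h1 : (∫ s in Set.Ioi (0:ℝ), (φ s - Real.exp (-(b T) * s) * φ s))
        = 1 - 1/(a T)^2 := by
      rw [integral_sub hφint (hexpint (b T) hbT.le), hφ1, hLbT T hT]
    have h2 : (∫ s in Set.Ioi (0:ℝ), b T * (s * Real.exp (-(b T) * s) * φ s))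
        ≤ ∫ s in Set.Ioi (0:ℝ), (φ s - Real.exp (-(b T) * s) * φ s) := by
      apply setIntegral_mono_on ((hsint (b T) hbT.le).const_mul (b T))
        (hφint.sub (hexpint (b T) hbT.le)) measurableSet_Ioi
      intro s hs
      have hs0 : (0:ℝ) < s := hs
      have hkey := aux_key1 (b T * s)
      rw [← neg_mul] at hkey
      simp only [Pi.sub_apply]
      nlinarith [hφnonneg s, Real.exp_pos (-(b T) * s)]
    rw [integral_const_mul] at h2
    linarith [h1 ▸ h2]
  -- monotonicity estimate for b T ≥ ε
  have hmonot : ∀ ε > (0:ℝ), ∀ T > (0:ℝ), ε ≤ b T →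
      1/(a T)^2 ≤ 1 - ε * Real.exp (-ε) * I := by
    intro ε hε T hT hεb
    have hbT := hb T hT
    have hL1 : (∫ s in Set.Ioi (0:ℝ), Real.exp (-(b T) * s) * φ s)
        ≤ ∫ s in Set.Ioi (0:ℝ), Real.exp (-ε * s) * φ s := by
      apply setIntegral_mono_on (hexpint (b T) hbT.le) (hexpint ε hε.le) measurableSet_Ioi
      intro s hs
      have hs0 : (0:ℝ) < s := hs
      have : Real.exp (-(b T) * s) ≤ Real.exp (-ε * s) := by
        apply Real.exp_le_exp.2; nlinarith
      nlinarith [hφnonneg s]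
    have hL2 : ε * Real.exp (-ε) * I ≤ 1 - ∫ s in Set.Ioi (0:ℝ), Real.exp (-ε * s) * φ s := by
      have h1 : (∫ s in Set.Ioi (0:ℝ), (φ s - Real.exp (-ε * s) * φ s))
          = 1 - ∫ s in Set.Ioi (0:ℝ), Real.exp (-ε * s) * φ s := by
        rw [integral_sub hφint (hexpint ε hε.le), hφ1]
      have h2 : (∫ s in Set.Ioi (0:ℝ), ε * Real.exp (-ε) * (min s 1 * φ s))
          ≤ ∫ s in Set.Ioi (0:ℝ), (φ s - Real.exp (-ε * s) * φ s) := by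
        apply setIntegral_mono_on (hminint.const_mul _)
          (hφint.sub (hexpint ε hε.le)) measurableSet_Ioi
        intro s hs
        have hs0 : (0:ℝ) < s := hs
        have hkey := aux_key3 ε s hε hs0
        rw [← neg_mul] at hkey
        simp only [Pi.sub_apply]
        have hmin : (0:ℝ) ≤ min s 1 := le_min hs0.le zero_le_one
        nlinarith [hφnonneg s]
      rw [integral_const_mul] at h2
      rw [← h1]
      exact h2
    rw [hLbT T hT] at hL1
    linarith
  -- b → 0
  have haTsq : Tendsto (fun T => 1 - 1/(a T)^2) atTop (𝓝 0) := by
    have h1 : Tendsto (fun T => 1/(a T)^2) atTop (𝓝 (1/1^2)) :=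
      (tendsto_const_nhds (x := (1:ℝ))).div (haT1.pow 2) (by norm_num)
    rw [show (1:ℝ)/1^2 = 1 by norm_num] at h1
    have h2 : Tendsto (fun T => 1 - 1/(a T)^2) atTop (𝓝 (1 - 1)) :=
      (tendsto_const_nhds (x := (1:ℝ))).sub h1
    rw [show (1:ℝ) - 1 = 0 by norm_num] at h2
    exact h2
  have hb0 : Tendsto b atTop (𝓝 0) := by
    rw [tendsto_order]
    constructor
    · intro c hc
      filter_upwards [eventually_gt_atTop (0:ℝ)] with T hT
      linarith [hb T hT]
    · intro c hc
      have hcI : 0 < c * Real.exp (-c) * I :=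
        mul_pos (mul_pos hc (Real.exp_pos _)) hI
      filter_upwards [eventually_gt_atTop (0:ℝ),
        haTsq.eventually_lt_const hcI] with T hT hT2
      by_contra hcontra
      push_neg at hcontra
      have := hmonot c hc T hT hcontra
      linarith
  -- g (b T) → m
  have hg : Tendsto (fun T => ∫ s in Set.Ioi (0:ℝ), s * Real.exp (-(b T) * s) * φ s)
      atTop (𝓝 m) := by
    rw [← hmval]
    apply tendsto_integral_filter_of_dominated_convergence (fun s => s * φ s)
    · filter_upwards with T
      exact ((measurable_id.mul ((measurable_id.const_mul (-(b T))).exp)).mul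
        hφmeas).aestronglyMeasurable
    · filter_upwards [eventually_gt_atTop (0:ℝ)] with T hT
      rw [ae_restrict_iff' measurableSet_Ioi]
      filter_upwards with s hs
      have hs0 : (0:ℝ) < s := hs
      have hbT := hb T hT
      have h1 : Real.exp (-(b T) * s) ≤ 1 := Real.exp_le_one_iff.2 (by nlinarith)
      rw [Real.norm_eq_abs,
        abs_of_nonneg (mul_nonneg (mul_nonneg hs0.le (Real.exp_pos _).le) (hφnonneg s))]
      nlinarith [mul_le_mul_of_nonneg_right
        (mul_le_mul_of_nonneg_left h1 hs0.le) (hφnonneg s)]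
    · exact hmint
    · apply Eventually.of_forall
      intro s
      have h1 : Tendsto (fun T => -(b T) * s) atTop (𝓝 (-0 * s)) := hb0.neg.mul_const s
      rw [show (-0 * s : ℝ) = 0 by ring] at h1
      have h2 : Tendsto (fun T => Real.exp (-(b T) * s)) atTop (𝓝 (Real.exp 0)) :=
        (Real.continuous_exp.tendsto 0).comp h1
      rw [Real.exp_zero] at h2
      have h3 : Tendsto (fun T => s * Real.exp (-(b T) * s) * φ s) atTop (𝓝 (s * 1 * φ s)) :=
        ((tendsto_const_nhds (x := s)).mul h2).mul (tendsto_const_nhds (x := φ s))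
      rw [show s * 1 * φ s = s * φ s by ring] at h3
      exact h3
  -- main quantity
  have hA : Tendsto (fun T => T * (1 - 1/(a T)^2)) atTop (𝓝 (2 * lam)) := by
    have h2 : Tendsto (fun T => (a T + 1)/(a T)^2) atTop (𝓝 2) := by
      have h := (haT1.add (tendsto_const_nhds (x := (1:ℝ)))).div (haT1.pow 2)
        (by norm_num : (1:ℝ)^2 ≠ 0)
      rw [show ((1:ℝ) + 1)/1^2 = 2 by norm_num] at h
      exact h
    have h3 := halim.mul h2
    have heq : lam * 2 = 2 * lam := by ring
    rw [heq] at h3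
    apply h3.congr'
    filter_upwards [eventually_gt_atTop (0:ℝ)] with T hT
    have ha1 := ha T hT
    have ha0 : a T ≠ 0 := by linarith
    field_simp
    ring
  -- squeeze
  have hlow : Tendsto (fun T => T * (1 - 1/(a T)^2) / m) atTop (𝓝 (2 * lam / m)) :=
    hA.div_const m
  have hhigh : Tendsto (fun T => T * (1 - 1/(a T)^2) /
      (∫ s in Set.Ioi (0:ℝ), s * Real.exp (-(b T) * s) * φ s)) atTop (𝓝 (2 * lam / m)) :=
    hA.div hg hm.ne'
  apply tendsto_of_tendsto_of_tendsto_of_le_of_le' hlow hhigh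
  · filter_upwards [eventually_gt_atTop (0:ℝ)] with T hT
    have h := hupper T hT
    rw [div_le_iff₀ hm]
    nlinarith
  · filter_upwards [eventually_gt_atTop (0:ℝ),
      hg.eventually_const_lt (by linarith : m/2 < m)] with T hT hgT
    have hgT0 : 0 < ∫ s in Set.Ioi (0:ℝ), s * Real.exp (-(b T) * s) * φ s := by linarith
    have h := hlower T hT
    rw [le_div_iff₀ hgT0]
    nlinarith
end

section
/- Let A ∈ ℝ, let f, g : [0,∞) → ℝ be locally bounded measurable functions, and let φ : [0,∞) → [0,∞) be locally integrable. If f_t = g_t + A ∫_0^t φ(t−s) f_s ds for all t ≥ 0, then for all t ≥ 0 the series ∑_{n≥1} |A|^n ∫_0^t φ^{*n}(t−s) |g_s| ds converges and f_t = g_t + ∑_{n≥1} A^n ∫_0^t φ^{*n}(t−s) g_s ds. -/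
open MeasureTheory Filter Topology

/-- Measurability of a parametric interval integral. -/
lemma meas_param {F : ℝ → ℝ → ℝ} (hF : Measurable fun p : ℝ × ℝ => F p.1 p.2) :
    Measurable fun t => ∫ s in (0:ℝ)..t, F t s := by
  have h1 : Measurable fun t => ∫ s, (Set.Ioc (0:ℝ) t).indicator (F t) s := by
    have : Measurable fun p : ℝ × ℝ => (Set.Ioc (0:ℝ) p.1).indicator (F p.1) p.2 := by
      have : (fun p : ℝ × ℝ => (Set.Ioc (0:ℝ) p.1).indicator (F p.1) p.2)
          = Set.indicator {p : ℝ × ℝ | 0 < p.2 ∧ p.2 ≤ p.1} (fun p => F p.1 p.2) := by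
        ext p
        by_cases h : 0 < p.2 ∧ p.2 ≤ p.1 <;>
          simp [Set.indicator, Set.mem_Ioc, h]
      rw [this]
      exact hF.indicator (by
        exact (measurableSet_lt measurable_const measurable_snd).inter
          (measurableSet_le measurable_snd measurable_fst))
    exact (this.stronglyMeasurable.integral_prod_right').measurable
  have h2 : Measurable fun t => ∫ s, (Set.Ioc t (0:ℝ)).indicator (F t) s := by
    have : Measurable fun p : ℝ × ℝ => (Set.Ioc p.1 (0:ℝ)).indicator (F p.1) p.2 := by
      have : (fun p : ℝ × ℝ => (Set.Ioc p.1 (0:ℝ)).indicator (F p.1) p.2)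
          = Set.indicator {p : ℝ × ℝ | p.1 < p.2 ∧ p.2 ≤ 0} (fun p => F p.1 p.2) := by
        ext p
        by_cases h : p.1 < p.2 ∧ p.2 ≤ 0 <;>
          simp [Set.indicator, Set.mem_Ioc, h]
      rw [this]
      exact hF.indicator ((measurableSet_lt measurable_fst measurable_snd).inter
          (measurableSet_le measurable_snd measurable_const))
    exact (this.stronglyMeasurable.integral_prod_right').measurable
  have : (fun t => ∫ s in (0:ℝ)..t, F t s)
      = fun t => (∫ s, (Set.Ioc (0:ℝ) t).indicator (F t) s)
        - ∫ s, (Set.Ioc t (0:ℝ)).indicator (F t) s := by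
    ext t
    rw [intervalIntegral.intervalIntegral_eq_integral_uIoc]
    rcases le_or_gt (0:ℝ) t with h | h
    · have e : Set.Ioc t (0:ℝ) = ∅ := Set.Ioc_eq_empty (not_lt.2 h)
      rw [Set.uIoc_of_le h, if_pos h, one_smul, integral_indicator measurableSet_Ioc,
        integral_indicator measurableSet_Ioc, e]
      simp
    · have e : Set.Ioc (0:ℝ) t = ∅ := Set.Ioc_eq_empty (not_lt.2 h.le)
      rw [Set.uIoc_of_ge h.le, if_neg (not_le.2 h), integral_indicator measurableSet_Ioc,
        integral_indicator measurableSet_Ioc, e]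
      simp
  rw [this]
  exact h1.sub h2

lemma convPow_measurable {φ : ℝ → ℝ} (hφ : Measurable φ) (n : ℕ) :
    Measurable (convPow φ n) := by
  induction n with
  | zero => exact hφ
  | succ n ih =>
    show Measurable fun t => ∫ s in (0:ℝ)..t, φ (t - s) * convPow φ n s
    apply meas_param
    exact ((hφ.comp (measurable_fst.sub measurable_snd)).mul (ih.comp measurable_snd))

lemma convPow_nonneg {φ : ℝ → ℝ} (hφ : ∀ s, 0 ≤ φ s) (n : ℕ) :
    ∀ t, 0 ≤ t → 0 ≤ convPow φ n t := by
  induction n with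
  | zero => exact fun t _ => hφ t
  | succ n ih =>
    intro t ht
    show 0 ≤ ∫ s in (0:ℝ)..t, φ (t - s) * convPow φ n s
    apply intervalIntegral.integral_nonneg ht
    intro u hu
    exact mul_nonneg (hφ _) (ih u hu.1)

lemma ofReal_integral_le {μ : Measure ℝ} {h : ℝ → ℝ} (hi' : 0 ≤ᵐ[μ] h) :
    ENNReal.ofReal (∫ x, h x ∂μ) ≤ ∫⁻ x, ENNReal.ofReal (h x) ∂μ := by
  by_cases hi : Integrable h μ
  · rw [ofReal_integral_eq_lintegral_ofReal hi hi']
  · rw [integral_undef hi]; simp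

lemma convPow_lint {φ : ℝ → ℝ} (hφm : Measurable φ) (hφnn : ∀ s, 0 ≤ φ s)
    (t₀ lam : ℝ) (n : ℕ) :
    ∫⁻ s in Set.Ioc 0 t₀, ENNReal.ofReal (Real.exp (-lam*s) * convPow φ n s)
      ≤ (∫⁻ s in Set.Ioc 0 t₀, ENNReal.ofReal (Real.exp (-lam*s) * φ s)) ^ (n+1) := by
  induction n with
  | zero => simp [convPow]
  | succ n ih =>
    set Phi := ∫⁻ s in Set.Ioc 0 t₀, ENNReal.ofReal (Real.exp (-lam*s) * φ s) with hPhi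
    set W : Set (ℝ × ℝ) := {p | 0 < p.2 ∧ p.2 ≤ p.1} with hWdef
    have hWm : MeasurableSet W :=
      (measurableSet_lt measurable_const measurable_snd).inter
        (measurableSet_le measurable_snd measurable_fst)
    set I : ℝ × ℝ → ENNReal := W.indicator
      (fun p => ENNReal.ofReal (Real.exp (-lam*p.1) * (φ (p.1-p.2) * convPow φ n p.2))) with hIdef
    have hconvm : Measurable (convPow φ n) := convPow_measurable hφm n
    have hIm : Measurable I := by
      apply Measurable.indicator _ hWm
      apply Measurable.ennreal_ofReal
      exact (((measurable_fst.const_mul (-lam)).exp).mul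
        ((hφm.comp (measurable_fst.sub measurable_snd)).mul (hconvm.comp measurable_snd)))
    -- pointwise bound
    have key : ∀ s ∈ Set.Ioc (0:ℝ) t₀,
        ENNReal.ofReal (Real.exp (-lam*s) * convPow φ (n+1) s)
          ≤ ∫⁻ u in Set.Ioc 0 t₀, I (s, u) := by
      intro s hs
      have h1 : convPow φ (n+1) s = ∫ u in Set.Ioc (0:ℝ) s, φ (s-u) * convPow φ n u := by
        show (∫ u in (0:ℝ)..s, φ (s - u) * convPow φ n u) = _
        rw [intervalIntegral.integral_of_le hs.1.le]
      have hmeas2 : Measurable fun u => φ (s-u) * convPow φ n u :=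
        (hφm.comp (measurable_const.sub measurable_id)).mul hconvm
      have hnn' : 0 ≤ᵐ[volume.restrict (Set.Ioc (0:ℝ) s)] fun u => φ (s-u) * convPow φ n u :=
        (ae_restrict_iff' measurableSet_Ioc).2 (ae_of_all _ fun u hu =>
          mul_nonneg (hφnn _) (convPow_nonneg hφnn n u hu.1.le))
      have hIs : (fun u => I (s, u)) = Set.indicator (Set.Ioc 0 s)
          (fun u => ENNReal.ofReal (Real.exp (-lam*s) * (φ (s-u) * convPow φ n u))) := by
        ext u
        by_cases h : u ∈ Set.Ioc (0:ℝ) s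
        · have : (s, u) ∈ W := ⟨h.1, h.2⟩
          simp [hIdef, Set.indicator_of_mem, this, h]
        · have : (s, u) ∉ W := fun hc => h ⟨hc.1, hc.2⟩
          simp [hIdef, Set.indicator_of_notMem, this, h]
      calc ENNReal.ofReal (Real.exp (-lam*s) * convPow φ (n+1) s)
          = ENNReal.ofReal (Real.exp (-lam*s))
            * ENNReal.ofReal (∫ u in Set.Ioc (0:ℝ) s, φ (s-u) * convPow φ n u) := by
            rw [h1, ENNReal.ofReal_mul (Real.exp_nonneg _)]
        _ ≤ ENNReal.ofReal (Real.exp (-lam*s))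
            * ∫⁻ u in Set.Ioc (0:ℝ) s, ENNReal.ofReal (φ (s-u) * convPow φ n u) :=
            mul_le_mul_right (ofReal_integral_le hnn') _
        _ = ∫⁻ u in Set.Ioc (0:ℝ) s, ENNReal.ofReal (Real.exp (-lam*s))
              * ENNReal.ofReal (φ (s-u) * convPow φ n u) :=
            (lintegral_const_mul _ (hmeas2.ennreal_ofReal)).symm
        _ = ∫⁻ u in Set.Ioc (0:ℝ) s,
              ENNReal.ofReal (Real.exp (-lam*s) * (φ (s-u) * convPow φ n u)) := by
            congr 1; ext u; rw [ENNReal.ofReal_mul (Real.exp_nonneg _)]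
        _ = ∫⁻ u in Set.Ioc (0:ℝ) t₀, I (s, u) := by
            rw [hIs, lintegral_indicator measurableSet_Ioc,
              Measure.restrict_restrict measurableSet_Ioc,
              Set.inter_eq_self_of_subset_left (Set.Ioc_subset_Ioc_right hs.2)]
    have hswapm : Measurable fun s => ∫⁻ u in Set.Ioc (0:ℝ) t₀, I (s, u) :=
      Measurable.lintegral_prod_right hIm
    calc ∫⁻ s in Set.Ioc 0 t₀, ENNReal.ofReal (Real.exp (-lam*s) * convPow φ (n+1) s)
        ≤ ∫⁻ s in Set.Ioc (0:ℝ) t₀, ∫⁻ u in Set.Ioc (0:ℝ) t₀, I (s, u) :=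
          setLIntegral_mono hswapm key
      _ = ∫⁻ u in Set.Ioc (0:ℝ) t₀, ∫⁻ s in Set.Ioc (0:ℝ) t₀, I (s, u) :=
          lintegral_lintegral_swap hIm.aemeasurable
      _ ≤ ∫⁻ u in Set.Ioc (0:ℝ) t₀,
            ENNReal.ofReal (Real.exp (-lam*u) * convPow φ n u) * Phi := by
          apply setLIntegral_mono (by fun_prop)
          intro u hu
          have hIu : (fun s => I (s, u)) = Set.indicator (Set.Ici u)
              (fun s => ENNReal.ofReal (Real.exp (-lam*s) * (φ (s-u) * convPow φ n u))) := by
            ext s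
            by_cases h : u ≤ s
            · have : (s, u) ∈ W := ⟨hu.1, h⟩
              simp [hIdef, Set.indicator_of_mem, this, Set.mem_Ici.2 h, h]
            · have : (s, u) ∉ W := fun hc => h hc.2
              simp [hIdef, Set.indicator_of_notMem, this, h]
          have e1 : Set.Ici u ∩ Set.Ioc (0:ℝ) t₀ = Set.Icc u t₀ := by
            ext s; simp only [Set.mem_inter_iff, Set.mem_Ici, Set.mem_Ioc, Set.mem_Icc]
            constructor
            · rintro ⟨h1, _, h3⟩; exact ⟨h1, h3⟩
            · rintro ⟨h1, h2⟩; exact ⟨h1, lt_of_lt_of_le hu.1 h1, h2⟩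
          rw [hIu, lintegral_indicator measurableSet_Ici,
            Measure.restrict_restrict measurableSet_Ici, e1,
            ← Measure.restrict_congr_set Ioc_ae_eq_Icc]
          -- pull out the constant ofReal (convPow φ n u)
          have e2 : (fun s => ENNReal.ofReal (Real.exp (-lam*s) * (φ (s-u) * convPow φ n u)))
              = fun s => ENNReal.ofReal (Real.exp (-lam*s) * φ (s-u))
                  * ENNReal.ofReal (convPow φ n u) := by
            ext s
            rw [← ENNReal.ofReal_mul (mul_nonneg (Real.exp_nonneg _) (hφnn _))]
            ring_nf
          rw [e2, lintegral_mul_const _ (by fun_prop)]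
          -- shift
          have emb : MeasurableEmbedding (fun v : ℝ => v + u) :=
            (Homeomorph.addRight u).measurableEmbedding
          have mp : MeasurePreserving (fun v : ℝ => v + u) volume volume :=
            measurePreserving_add_right volume u
          have pre : (fun v : ℝ => v + u) ⁻¹' (Set.Ioc u t₀) = Set.Ioc 0 (t₀ - u) := by
            ext v; simp only [Set.mem_preimage, Set.mem_Ioc]
            constructor <;> intro h <;> constructor <;> linarith [h.1, h.2]
          have shift : ∫⁻ s in Set.Ioc u t₀, ENNReal.ofReal (Real.exp (-lam*s) * φ (s-u))
              = ∫⁻ v in Set.Ioc 0 (t₀-u),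
                  ENNReal.ofReal (Real.exp (-lam*(v+u)) * φ v) := by
            rw [← mp.setLIntegral_comp_preimage_emb emb
              (fun s => ENNReal.ofReal (Real.exp (-lam*s) * φ (s-u))) (Set.Ioc u t₀), pre]
            congr 1; ext v; simp
          have e3 : ∀ v : ℝ, ENNReal.ofReal (Real.exp (-lam*(v+u)) * φ v)
              = ENNReal.ofReal (Real.exp (-lam*u))
                * ENNReal.ofReal (Real.exp (-lam*v) * φ v) := by
            intro v
            rw [← ENNReal.ofReal_mul (Real.exp_nonneg _)]
            congr 1
            rw [← mul_assoc, ← Real.exp_add]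
            ring_nf
          calc (∫⁻ s in Set.Ioc u t₀, ENNReal.ofReal (Real.exp (-lam*s) * φ (s-u)))
                * ENNReal.ofReal (convPow φ n u)
              = (∫⁻ v in Set.Ioc 0 (t₀-u), ENNReal.ofReal (Real.exp (-lam*(v+u)) * φ v))
                * ENNReal.ofReal (convPow φ n u) := by rw [shift]
            _ = ENNReal.ofReal (Real.exp (-lam*u))
                * (∫⁻ v in Set.Ioc 0 (t₀-u), ENNReal.ofReal (Real.exp (-lam*v) * φ v))
                * ENNReal.ofReal (convPow φ n u) := by
                rw [← lintegral_const_mul _ (by fun_prop)]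
                congr 2
                ext v; exact e3 v
            _ ≤ ENNReal.ofReal (Real.exp (-lam*u)) * Phi * ENNReal.ofReal (convPow φ n u) := by
                gcongr
                exact lintegral_mono_set (Set.Ioc_subset_Ioc_right (by linarith [hu.1]))
            _ = ENNReal.ofReal (Real.exp (-lam*u) * convPow φ n u) * Phi := by
                rw [ENNReal.ofReal_mul (Real.exp_nonneg _)]
                ring
      _ = (∫⁻ u in Set.Ioc (0:ℝ) t₀, ENNReal.ofReal (Real.exp (-lam*u) * convPow φ n u))
            * Phi := lintegral_mul_const _ (by fun_prop)
      _ ≤ Phi ^ (n+1) * Phi := by gcongr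
      _ = Phi ^ (n+2) := (pow_succ Phi (n+1)).symm

lemma Phi_lt_top {φ : ℝ → ℝ} (hφm : Measurable φ) (hφnn : ∀ s, 0 ≤ φ s) {t₀ lam : ℝ}
    (hlam : 0 ≤ lam) (hφint : IntegrableOn φ (Set.Icc 0 t₀)) :
    (∫⁻ s in Set.Ioc 0 t₀, ENNReal.ofReal (Real.exp (-lam*s) * φ s)) < ⊤ := by
  have hle : ∀ s ∈ Set.Ioc (0:ℝ) t₀,
      ENNReal.ofReal (Real.exp (-lam*s) * φ s) ≤ (‖φ s‖₊ : ENNReal) := by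
    intro s hs
    have h1 : Real.exp (-lam*s) ≤ 1 := by
      rw [Real.exp_le_one_iff]
      nlinarith [hs.1]
    calc ENNReal.ofReal (Real.exp (-lam*s) * φ s) ≤ ENNReal.ofReal (φ s) :=
          ENNReal.ofReal_le_ofReal
            (mul_le_of_le_one_left (hφnn s) h1)
      _ ≤ (‖φ s‖₊ : ENNReal) := Real.ofReal_le_enorm _
  calc (∫⁻ s in Set.Ioc 0 t₀, ENNReal.ofReal (Real.exp (-lam*s) * φ s))
      ≤ ∫⁻ s in Set.Ioc 0 t₀, (‖φ s‖₊ : ENNReal) := setLIntegral_mono hφm.enorm hle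
    _ ≤ ∫⁻ s in Set.Icc 0 t₀, (‖φ s‖₊ : ENNReal) := lintegral_mono_set Set.Ioc_subset_Icc_self
    _ < ⊤ := hφint.hasFiniteIntegral

lemma convPow_integrableOn {φ : ℝ → ℝ} (hφm : Measurable φ) (hφnn : ∀ s, 0 ≤ φ s)
    {t₀ : ℝ} (hφint : IntegrableOn φ (Set.Icc 0 t₀)) (n : ℕ) :
    IntegrableOn (convPow φ n) (Set.Ioc 0 t₀) := by
  have hconvm : Measurable (convPow φ n) := convPow_measurable hφm n
  refine ⟨hconvm.aestronglyMeasurable.restrict, ?_⟩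
  have h0 : ∀ s ∈ Set.Ioc (0:ℝ) t₀, (‖convPow φ n s‖₊ : ENNReal)
      = ENNReal.ofReal (Real.exp (-(0:ℝ)*s) * convPow φ n s) := by
    intro s hs
    rw [neg_zero, zero_mul, Real.exp_zero, one_mul,
      ← Real.enorm_eq_ofReal (convPow_nonneg hφnn n s hs.1.le), enorm_eq_nnnorm]
  rw [HasFiniteIntegral]
  calc ∫⁻ s in Set.Ioc 0 t₀, (‖convPow φ n s‖₊ : ENNReal)
      = ∫⁻ s in Set.Ioc 0 t₀, ENNReal.ofReal (Real.exp (-(0:ℝ)*s) * convPow φ n s) :=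
        setLIntegral_congr_fun measurableSet_Ioc h0
    _ ≤ (∫⁻ s in Set.Ioc 0 t₀, ENNReal.ofReal (Real.exp (-(0:ℝ)*s) * φ s)) ^ (n+1) :=
        convPow_lint hφm hφnn t₀ 0 n
    _ < ⊤ := ENNReal.pow_lt_top (Phi_lt_top hφm hφnn le_rfl hφint)

lemma conv_mul_intervalIntegrable {φ h : ℝ → ℝ} (hφm : Measurable φ) (hφnn : ∀ s, 0 ≤ φ s)
    (hhm : Measurable h) {t₀ t C : ℝ} (hφint : IntegrableOn φ (Set.Icc 0 t₀))
    (ht : t ∈ Set.Icc (0:ℝ) t₀) (hC : ∀ s ∈ Set.Icc (0:ℝ) t₀, |h s| ≤ C) (n : ℕ) :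
    IntervalIntegrable (fun s => convPow φ n (t-s) * h s) volume 0 t := by
  have hconv : IntegrableOn (convPow φ n) (Set.Ioc 0 t) :=
    convPow_integrableOn hφm hφnn (hφint.mono_set (Set.Icc_subset_Icc_right ht.2)) n
  have h1 : IntervalIntegrable (convPow φ n) volume 0 t :=
    (intervalIntegrable_iff_integrableOn_Ioc_of_le ht.1).2 hconv
  have h2 : IntervalIntegrable (fun s => convPow φ n (t - s)) volume 0 t := by
    simpa using (h1.comp_sub_left t).symm
  rw [intervalIntegrable_iff_integrableOn_Ioc_of_le ht.1] at h2 ⊢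
  apply Integrable.mono' (h2.const_mul C)
  · exact (((convPow_measurable hφm n).comp (measurable_const.sub measurable_id)).mul
      hhm).aestronglyMeasurable.restrict
  · refine (ae_restrict_iff' measurableSet_Ioc).2 (ae_of_all _ fun s hs => ?_)
    have hnn : 0 ≤ convPow φ n (t - s) := convPow_nonneg hφnn n _ (by linarith [hs.2])
    have hCs : |h s| ≤ C := hC s ⟨hs.1.le, le_trans hs.2 ht.2⟩
    calc ‖convPow φ n (t-s) * h s‖ = convPow φ n (t-s) * |h s| := by
          rw [norm_mul, Real.norm_eq_abs, Real.norm_eq_abs, abs_of_nonneg hnn]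
      _ ≤ C * convPow φ n (t-s) := by
          rw [mul_comm]
          exact mul_le_mul_of_nonneg_right hCs hnn

lemma conv_mul_bound {φ h : ℝ → ℝ} (hφm : Measurable φ) (hφnn : ∀ s, 0 ≤ φ s)
    (hhm : Measurable h) {t₀ t C lam : ℝ} (hφint : IntegrableOn φ (Set.Icc 0 t₀))
    (ht : t ∈ Set.Icc (0:ℝ) t₀) (hC : ∀ s ∈ Set.Icc (0:ℝ) t₀, |h s| ≤ C)
    (hlam : 0 ≤ lam) (n : ℕ) :
    |∫ s in (0:ℝ)..t, convPow φ n (t-s) * h s|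
      ≤ C * Real.exp (lam*t₀)
        * ((∫⁻ s in Set.Ioc 0 t₀, ENNReal.ofReal (Real.exp (-lam*s) * φ s)).toReal) ^ (n+1) := by
  have hC0 : 0 ≤ C := le_trans (abs_nonneg _) (hC 0 ⟨le_rfl, le_trans ht.1 ht.2⟩)
  have hconvm := convPow_measurable hφm n
  have hconv : IntegrableOn (convPow φ n) (Set.Ioc 0 t) :=
    convPow_integrableOn hφm hφnn (hφint.mono_set (Set.Icc_subset_Icc_right ht.2)) n
  have h1 : IntervalIntegrable (convPow φ n) volume 0 t :=
    (intervalIntegrable_iff_integrableOn_Ioc_of_le ht.1).2 hconv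
  have h2 : IntervalIntegrable (fun s => convPow φ n (t - s)) volume 0 t := by
    simpa using (h1.comp_sub_left t).symm
  have hint := conv_mul_intervalIntegrable hφm hφnn hhm hφint ht hC n
  have hw : IntervalIntegrable (fun u => Real.exp (-lam*u) * convPow φ n u) volume 0 t := by
    rw [intervalIntegrable_iff_integrableOn_Ioc_of_le ht.1] at h1 ⊢
    apply Integrable.mono' h1
    · exact ((measurable_id.const_mul (-lam)).exp.mul hconvm).aestronglyMeasurable.restrict
    · refine (ae_restrict_iff' measurableSet_Ioc).2 (ae_of_all _ fun u hu => ?_)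
      have hnn := convPow_nonneg hφnn n u hu.1.le
      have he1 : Real.exp (-lam*u) ≤ 1 := by
        rw [Real.exp_le_one_iff]; nlinarith [hu.1]
      rw [Real.norm_eq_abs, abs_of_nonneg (mul_nonneg (Real.exp_nonneg _) hnn)]
      exact mul_le_of_le_one_left hnn he1
  have stepA : |∫ s in (0:ℝ)..t, convPow φ n (t-s) * h s|
      ≤ ∫ s in (0:ℝ)..t, |convPow φ n (t-s) * h s| :=
    intervalIntegral.abs_integral_le_integral_abs ht.1
  have stepB : (∫ s in (0:ℝ)..t, |convPow φ n (t-s) * h s|)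
      ≤ ∫ s in (0:ℝ)..t, C * convPow φ n (t-s) := by
    apply intervalIntegral.integral_mono_on ht.1 hint.abs (h2.const_mul C)
    intro s hs
    have hnn : 0 ≤ convPow φ n (t - s) := convPow_nonneg hφnn n _ (by linarith [hs.2])
    have hCs : |h s| ≤ C := hC s ⟨hs.1, le_trans hs.2 ht.2⟩
    calc |convPow φ n (t-s) * h s| = convPow φ n (t-s) * |h s| := by
          rw [abs_mul, abs_of_nonneg hnn]
      _ ≤ C * convPow φ n (t-s) := by
          rw [mul_comm]; exact mul_le_mul_of_nonneg_right hCs hnn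
  have stepC : (∫ s in (0:ℝ)..t, C * convPow φ n (t-s)) = C * ∫ u in (0:ℝ)..t, convPow φ n u := by
    rw [intervalIntegral.integral_const_mul]
    congr 1
    have := intervalIntegral.integral_comp_sub_left (a := (0:ℝ)) (b := t) (convPow φ n) t
    simpa using this
  have stepD : (∫ u in (0:ℝ)..t, convPow φ n u)
      ≤ Real.exp (lam*t₀) * ∫ u in (0:ℝ)..t, Real.exp (-lam*u) * convPow φ n u := by
    rw [← intervalIntegral.integral_const_mul]
    apply intervalIntegral.integral_mono_on ht.1 h1 (hw.const_mul _)
    intro u hu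
    have hnn := convPow_nonneg hφnn n u hu.1
    have : (1:ℝ) ≤ Real.exp (lam*t₀) * Real.exp (-lam*u) := by
      rw [← Real.exp_add, ← Real.exp_zero]
      apply Real.exp_le_exp.2
      nlinarith [hu.2, ht.2]
    calc convPow φ n u = 1 * convPow φ n u := (one_mul _).symm
      _ ≤ (Real.exp (lam*t₀) * Real.exp (-lam*u)) * convPow φ n u :=
          mul_le_mul_of_nonneg_right this hnn
      _ = Real.exp (lam*t₀) * (Real.exp (-lam*u) * convPow φ n u) := mul_assoc _ _ _
  have stepE : (∫ u in (0:ℝ)..t, Real.exp (-lam*u) * convPow φ n u)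
      = (∫⁻ u in Set.Ioc 0 t, ENNReal.ofReal (Real.exp (-lam*u) * convPow φ n u)).toReal := by
    rw [intervalIntegral.integral_of_le ht.1]
    apply integral_eq_lintegral_of_nonneg_ae
    · refine (ae_restrict_iff' measurableSet_Ioc).2 (ae_of_all _ fun u hu => ?_)
      exact mul_nonneg (Real.exp_nonneg _) (convPow_nonneg hφnn n u hu.1.le)
    · exact ((measurable_id.const_mul (-lam)).exp.mul hconvm).aestronglyMeasurable.restrict
  have hPhi := Phi_lt_top hφm hφnn hlam hφint
  have stepF : (∫⁻ u in Set.Ioc 0 t, ENNReal.ofReal (Real.exp (-lam*u) * convPow φ n u)).toReal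
      ≤ ((∫⁻ s in Set.Ioc 0 t₀, ENNReal.ofReal (Real.exp (-lam*s) * φ s)).toReal) ^ (n+1) := by
    rw [← ENNReal.toReal_pow]
    apply ENNReal.toReal_mono (ENNReal.pow_ne_top hPhi.ne)
    calc ∫⁻ u in Set.Ioc 0 t, ENNReal.ofReal (Real.exp (-lam*u) * convPow φ n u)
        ≤ ∫⁻ u in Set.Ioc 0 t₀, ENNReal.ofReal (Real.exp (-lam*u) * convPow φ n u) :=
          lintegral_mono_set (Set.Ioc_subset_Ioc_right ht.2)
      _ ≤ _ := convPow_lint hφm hφnn t₀ lam n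
  calc |∫ s in (0:ℝ)..t, convPow φ n (t-s) * h s|
      ≤ ∫ s in (0:ℝ)..t, C * convPow φ n (t-s) := le_trans stepA stepB
    _ = C * ∫ u in (0:ℝ)..t, convPow φ n u := stepC
    _ ≤ C * (Real.exp (lam*t₀) * ∫ u in (0:ℝ)..t, Real.exp (-lam*u) * convPow φ n u) :=
        mul_le_mul_of_nonneg_left stepD hC0
    _ ≤ C * Real.exp (lam*t₀)
        * ((∫⁻ s in Set.Ioc 0 t₀, ENNReal.ofReal (Real.exp (-lam*s) * φ s)).toReal) ^ (n+1) := by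
        rw [mul_assoc]
        apply mul_le_mul_of_nonneg_left _ hC0
        apply mul_le_mul_of_nonneg_left _ (Real.exp_nonneg _)
        rw [stepE]
        exact stepF

lemma lint_reflect {G : ℝ → ENNReal} (s : ℝ) :
    ∫⁻ u in Set.Ioc 0 s, G (s - u) = ∫⁻ v in Set.Ico 0 s, G v := by
  have mp : MeasurePreserving (fun u : ℝ => s - u) volume volume :=
    Measure.measurePreserving_sub_left volume s
  have emb : MeasurableEmbedding (fun u : ℝ => s - u) :=
    (Homeomorph.subLeft s).measurableEmbedding
  have pre : (fun u : ℝ => s - u) ⁻¹' (Set.Ico 0 s) = Set.Ioc 0 s := by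
    ext u; simp only [Set.mem_preimage, Set.mem_Ico, Set.mem_Ioc]
    constructor <;> intro h <;> constructor <;> linarith [h.1, h.2]
  rw [← pre]
  exact mp.setLIntegral_comp_preimage_emb emb G (Set.Ico 0 s)

lemma fubini_step {φ h : ℝ → ℝ} (hφm : Measurable φ) (hφnn : ∀ s, 0 ≤ φ s)
    (hhm : Measurable h) {t C : ℝ} (hφint : IntegrableOn φ (Set.Icc 0 t))
    (ht : 0 ≤ t) (hC : ∀ s ∈ Set.Icc (0:ℝ) t, |h s| ≤ C) (n : ℕ) :
    (∫ s in (0:ℝ)..t, convPow φ n (t-s) * (∫ u in (0:ℝ)..s, φ (s-u) * h u))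
      = ∫ u in (0:ℝ)..t, convPow φ (n+1) (t-u) * h u := by
  have hconvm := convPow_measurable hφm (n := n)
  set W : Set (ℝ × ℝ) := {p | 0 < p.2 ∧ p.2 ≤ p.1} with hWdef
  have hWm : MeasurableSet W :=
    (measurableSet_lt measurable_const measurable_snd).inter
      (measurableSet_le measurable_snd measurable_fst)
  set F : ℝ × ℝ → ℝ := fun p =>
    convPow φ n (t - p.1) * (W.indicator (fun q => φ (q.1 - q.2)) p) * h p.2 with hFdef
  have hFm : Measurable F := by
    exact ((hconvm.comp (measurable_const.sub measurable_fst)).mul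
      ((hφm.comp (measurable_fst.sub measurable_snd)).indicator hWm)).mul
      (hhm.comp measurable_snd)
  set μ := volume.restrict (Set.Ioc (0:ℝ) t) with hμdef
  have hB : (∫⁻ v in Set.Icc (0:ℝ) t, ENNReal.ofReal (φ v)) < ⊤ := by
    calc (∫⁻ v in Set.Icc (0:ℝ) t, ENNReal.ofReal (φ v))
        ≤ ∫⁻ v in Set.Icc (0:ℝ) t, (‖φ v‖₊ : ENNReal) :=
          setLIntegral_mono hφm.enorm (fun v _ => Real.ofReal_le_enorm _)
      _ < ⊤ := hφint.hasFiniteIntegral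
  have hCc : (∫⁻ v in Set.Ico (0:ℝ) t, ENNReal.ofReal (convPow φ n v)) < ⊤ := by
    calc (∫⁻ v in Set.Ico (0:ℝ) t, ENNReal.ofReal (convPow φ n v))
        ≤ ∫⁻ v in Set.Ico (0:ℝ) t, (‖convPow φ n v‖₊ : ENNReal) :=
          setLIntegral_mono hconvm.enorm (fun v _ => Real.ofReal_le_enorm _)
      _ = ∫⁻ v in Set.Ioc (0:ℝ) t, (‖convPow φ n v‖₊ : ENNReal) := by
          rw [Measure.restrict_congr_set Ico_ae_eq_Ioc]
      _ < ⊤ := (convPow_integrableOn hφm hφnn hφint n).hasFiniteIntegral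
  have hC0 : 0 ≤ C := le_trans (abs_nonneg _) (hC 0 ⟨le_rfl, ht⟩)
  -- product integrability
  have hFint : Integrable F (μ.prod μ) := by
    refine ⟨hFm.aestronglyMeasurable, ?_⟩
    rw [HasFiniteIntegral, lintegral_prod _ (hFm.enorm.aemeasurable)]
    have key_s : ∀ s ∈ Set.Ioc (0:ℝ) t,
        (∫⁻ u in Set.Ioc (0:ℝ) t, (‖F (s, u)‖₊ : ENNReal))
          ≤ ENNReal.ofReal (convPow φ n (t-s))
            * (ENNReal.ofReal C * ∫⁻ v in Set.Icc (0:ℝ) t, ENNReal.ofReal (φ v)) := by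
      intro s hs
      have hpt : ∀ u ∈ Set.Ioc (0:ℝ) t, (‖F (s, u)‖₊ : ENNReal)
          ≤ (Set.Ioc (0:ℝ) s).indicator
              (fun u => ENNReal.ofReal (convPow φ n (t-s)) * ENNReal.ofReal C
                * ENNReal.ofReal (φ (s-u))) u := by
        intro u hu
        by_cases huW : (s, u) ∈ W
        · have hmem : u ∈ Set.Ioc (0:ℝ) s := ⟨huW.1, huW.2⟩
          rw [Set.indicator_of_mem hmem]
          have hFval : F (s, u) = convPow φ n (t-s) * φ (s - u) * h u := by
            simp [hFdef, Set.indicator_of_mem huW]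
          rw [hFval, ← enorm_eq_nnnorm, Real.enorm_eq_ofReal_abs]
          have hconvnn : 0 ≤ convPow φ n (t-s) := convPow_nonneg hφnn n _ (by linarith [hs.2])
          have : |convPow φ n (t-s) * φ (s - u) * h u|
              ≤ convPow φ n (t-s) * C * φ (s-u) := by
            rw [abs_mul, abs_mul, abs_of_nonneg hconvnn, abs_of_nonneg (hφnn _)]
            have := hC u ⟨hu.1.le, hu.2⟩
            nlinarith [abs_nonneg (h u), hφnn (s-u), mul_nonneg hconvnn (hφnn (s-u))]
          refine le_trans (ENNReal.ofReal_le_ofReal this) ?_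
          rw [ENNReal.ofReal_mul (mul_nonneg hconvnn hC0), ENNReal.ofReal_mul hconvnn]
        · have hmem : u ∉ Set.Ioc (0:ℝ) s := fun hc => huW ⟨hc.1, hc.2⟩
          rw [Set.indicator_of_notMem hmem]
          have hFval : F (s, u) = 0 := by
            simp [hFdef, Set.indicator_of_notMem huW]
          simp [hFval]
      calc (∫⁻ u in Set.Ioc (0:ℝ) t, (‖F (s, u)‖₊ : ENNReal))
          ≤ ∫⁻ u in Set.Ioc (0:ℝ) t, (Set.Ioc (0:ℝ) s).indicator
              (fun u => ENNReal.ofReal (convPow φ n (t-s)) * ENNReal.ofReal C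
                * ENNReal.ofReal (φ (s-u))) u :=
            setLIntegral_mono ((((measurable_const).mul
              (hφm.comp (measurable_const.sub measurable_id)).ennreal_ofReal)).indicator
              measurableSet_Ioc) hpt
        _ = ∫⁻ u in Set.Ioc (0:ℝ) s, ENNReal.ofReal (convPow φ n (t-s)) * ENNReal.ofReal C
              * ENNReal.ofReal (φ (s-u)) := by
            rw [lintegral_indicator measurableSet_Ioc,
              Measure.restrict_restrict measurableSet_Ioc,
              Set.inter_eq_self_of_subset_left (Set.Ioc_subset_Ioc_right hs.2)]
        _ = ENNReal.ofReal (convPow φ n (t-s)) * ENNReal.ofReal C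
              * ∫⁻ u in Set.Ioc (0:ℝ) s, ENNReal.ofReal (φ (s-u)) :=
            lintegral_const_mul _ ((hφm.comp (measurable_const.sub measurable_id)).ennreal_ofReal)
        _ = ENNReal.ofReal (convPow φ n (t-s)) * ENNReal.ofReal C
              * ∫⁻ v in Set.Ico (0:ℝ) s, ENNReal.ofReal (φ v) := by
            rw [lint_reflect (G := fun v => ENNReal.ofReal (φ v)) s]
        _ ≤ ENNReal.ofReal (convPow φ n (t-s)) * ENNReal.ofReal C
              * ∫⁻ v in Set.Icc (0:ℝ) t, ENNReal.ofReal (φ v) := by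
            gcongr
            exact fun v hv => ⟨hv.1, le_trans hv.2.le hs.2⟩
        _ = _ := by ring
    calc ∫⁻ s, (∫⁻ u, (‖F (s, u)‖₊ : ENNReal) ∂μ) ∂μ
        ≤ ∫⁻ s in Set.Ioc (0:ℝ) t, ENNReal.ofReal (convPow φ n (t-s))
            * (ENNReal.ofReal C * ∫⁻ v in Set.Icc (0:ℝ) t, ENNReal.ofReal (φ v)) :=
          setLIntegral_mono (by fun_prop) key_s
      _ = (∫⁻ s in Set.Ioc (0:ℝ) t, ENNReal.ofReal (convPow φ n (t-s)))
            * (ENNReal.ofReal C * ∫⁻ v in Set.Icc (0:ℝ) t, ENNReal.ofReal (φ v)) :=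
          lintegral_mul_const _ ((hconvm.comp (measurable_const.sub measurable_id)).ennreal_ofReal)
      _ = (∫⁻ v in Set.Ico (0:ℝ) t, ENNReal.ofReal (convPow φ n v))
            * (ENNReal.ofReal C * ∫⁻ v in Set.Icc (0:ℝ) t, ENNReal.ofReal (φ v)) := by
          rw [lint_reflect (G := fun v => ENNReal.ofReal (convPow φ n v)) t]
      _ < ⊤ := ENNReal.mul_lt_top hCc (ENNReal.mul_lt_top ENNReal.ofReal_lt_top hB)
  -- now the actual computation
  have claim1 : ∀ s ∈ Set.Ioc (0:ℝ) t,
      convPow φ n (t-s) * (∫ u in (0:ℝ)..s, φ (s-u) * h u) = ∫ u, F (s, u) ∂μ := by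
    intro s hs
    have e1 : (fun u => F (s, u)) = (Set.Ioc (0:ℝ) s).indicator
        (fun u => convPow φ n (t-s) * (φ (s-u) * h u)) := by
      ext u
      by_cases hu : u ∈ Set.Ioc (0:ℝ) s
      · have hW : (s, u) ∈ W := ⟨hu.1, hu.2⟩
        rw [Set.indicator_of_mem hu]
        simp [hFdef, Set.indicator_of_mem hW, mul_assoc]
      · have hW : (s, u) ∉ W := fun hc => hu ⟨hc.1, hc.2⟩
        rw [Set.indicator_of_notMem hu]
        simp [hFdef, Set.indicator_of_notMem hW]
    rw [e1, hμdef, integral_indicator measurableSet_Ioc,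
      Measure.restrict_restrict measurableSet_Ioc,
      Set.inter_eq_self_of_subset_left (Set.Ioc_subset_Ioc_right hs.2),
      MeasureTheory.integral_const_mul, intervalIntegral.integral_of_le hs.1.le]
  have claim2 : ∀ u ∈ Set.Ioc (0:ℝ) t,
      (∫ s, F (s, u) ∂μ) = convPow φ (n+1) (t-u) * h u := by
    intro u hu
    have e2 : (fun s => F (s, u)) = (Set.Ici u).indicator
        (fun s => convPow φ n (t-s) * φ (s-u) * h u) := by
      ext s
      by_cases hsu : u ≤ s
      · have hW : (s, u) ∈ W := ⟨hu.1, hsu⟩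
        rw [Set.indicator_of_mem (Set.mem_Ici.2 hsu)]
        simp [hFdef, Set.indicator_of_mem hW]
      · have hW : (s, u) ∉ W := fun hc => hsu hc.2
        rw [Set.indicator_of_notMem (fun hc => hsu (Set.mem_Ici.1 hc))]
        simp [hFdef, Set.indicator_of_notMem hW]
    have e1' : Set.Ici u ∩ Set.Ioc (0:ℝ) t = Set.Icc u t := by
      ext s; simp only [Set.mem_inter_iff, Set.mem_Ici, Set.mem_Ioc, Set.mem_Icc]
      constructor
      · rintro ⟨h1, _, h3⟩; exact ⟨h1, h3⟩
      · rintro ⟨h1, h2⟩; exact ⟨h1, lt_of_lt_of_le hu.1 h1, h2⟩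
    rw [e2, hμdef, integral_indicator measurableSet_Ici,
      Measure.restrict_restrict measurableSet_Ici, e1',
      ← Measure.restrict_congr_set Ioc_ae_eq_Icc,
      ← intervalIntegral.integral_of_le hu.2, intervalIntegral.integral_mul_const]
    congr 1
    have e4 := intervalIntegral.integral_comp_sub_left (a := u) (b := t)
      (fun x => convPow φ n x * φ (t - x - u)) t
    have e5 : (∫ s in u..t, convPow φ n (t-s) * φ (s-u))
        = ∫ x in (0:ℝ)..(t-u), convPow φ n x * φ (t - x - u) := by
      simp only [sub_sub_cancel] at e4
      rw [sub_self] at e4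
      exact e4
    rw [e5]
    show _ = ∫ v in (0:ℝ)..(t-u), φ (t - u - v) * convPow φ n v
    apply intervalIntegral.integral_congr
    intro x _
    show convPow φ n x * φ (t - x - u) = φ (t - u - x) * convPow φ n x
    rw [mul_comm, sub_right_comm]
  calc (∫ s in (0:ℝ)..t, convPow φ n (t-s) * (∫ u in (0:ℝ)..s, φ (s-u) * h u))
      = ∫ s in Set.Ioc (0:ℝ) t, convPow φ n (t-s) * (∫ u in (0:ℝ)..s, φ (s-u) * h u) :=
        intervalIntegral.integral_of_le ht
    _ = ∫ s, (∫ u, F (s, u) ∂μ) ∂μ := setIntegral_congr_fun measurableSet_Ioc claim1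
    _ = ∫ u, (∫ s, F (s, u) ∂μ) ∂μ := by
        have : Integrable (Function.uncurry fun s u => F (s, u)) (μ.prod μ) := by
          apply hFint.congr
          filter_upwards with p
          rfl
        exact integral_integral_swap this
    _ = ∫ u in Set.Ioc (0:ℝ) t, convPow φ (n+1) (t-u) * h u :=
        setIntegral_congr_fun measurableSet_Ioc claim2
    _ = ∫ u in (0:ℝ)..t, convPow φ (n+1) (t-u) * h u :=
        (intervalIntegral.integral_of_le ht).symm

lemma exists_lam {φ : ℝ → ℝ} (hφm : Measurable φ) (hφnn : ∀ s, 0 ≤ φ s) {t₀ : ℝ}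
    (hφint : IntegrableOn φ (Set.Icc 0 t₀)) {ε : ℝ} (hε : 0 < ε) :
    ∃ lam : ℝ, 0 ≤ lam ∧
      (∫⁻ s in Set.Ioc 0 t₀, ENNReal.ofReal (Real.exp (-lam*s) * φ s)).toReal ≤ ε := by
  set μ := volume.restrict (Set.Ioc (0:ℝ) t₀) with hμ
  set F : ℕ → ℝ → ENNReal := fun n s => ENNReal.ofReal (Real.exp (-(n:ℝ)*s) * φ s) with hF
  have hFm : ∀ n, Measurable (F n) :=
    fun n => ((measurable_id.const_mul (-(n:ℝ))).exp.mul hφm).ennreal_ofReal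
  have hbound : ∀ n, F n ≤ᵐ[μ] fun s => ENNReal.ofReal (φ s) := by
    intro n
    refine (ae_restrict_iff' measurableSet_Ioc).2 (ae_of_all _ fun s hs => ?_)
    apply ENNReal.ofReal_le_ofReal
    apply mul_le_of_le_one_left (hφnn s)
    rw [Real.exp_le_one_iff]
    have : (0:ℝ) ≤ (n:ℝ) := Nat.cast_nonneg n
    nlinarith [hs.1]
  have hfin : (∫⁻ s, ENNReal.ofReal (φ s) ∂μ) ≠ ⊤ := by
    refine ne_of_lt ?_
    calc (∫⁻ s, ENNReal.ofReal (φ s) ∂μ)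
        ≤ ∫⁻ s in Set.Icc (0:ℝ) t₀, (‖φ s‖₊ : ENNReal) := by
          rw [hμ]
          refine le_trans (setLIntegral_mono hφm.enorm
            (fun v _ => Real.ofReal_le_enorm _)) ?_
          exact lintegral_mono_set Set.Ioc_subset_Icc_self
      _ < ⊤ := hφint.hasFiniteIntegral
  have hlim : ∀ᵐ s ∂μ, Tendsto (fun n => F n s) atTop (𝓝 0) := by
    refine (ae_restrict_iff' measurableSet_Ioc).2 (ae_of_all _ fun s hs => ?_)
    have h1 : Tendsto (fun n : ℕ => Real.exp (-(n:ℝ)*s) * φ s) atTop (𝓝 0) := by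
      have he : ∀ n : ℕ, Real.exp (-(n:ℝ)*s) = (Real.exp (-s))^n := by
        intro n
        rw [← Real.exp_nat_mul]
        congr 1
        ring
      simp only [he]
      have := tendsto_pow_atTop_nhds_zero_of_lt_one (Real.exp_nonneg (-s))
        (Real.exp_lt_one_iff.2 (by linarith [hs.1]))
      simpa using this.mul_const (φ s)
    have h2 := ENNReal.tendsto_ofReal h1
    rw [ENNReal.ofReal_zero] at h2
    exact h2.comp (tendsto_id (α := ℕ)) |>.congr (fun n => rfl)
  have hmain : Tendsto (fun n => ∫⁻ s, F n s ∂μ) atTop (𝓝 0) := by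
    have := tendsto_lintegral_of_dominated_convergence (μ := μ) _ hFm hbound hfin hlim
    simpa using this
  have hev : ∀ᶠ n in atTop, (∫⁻ s, F n s ∂μ) < ENNReal.ofReal ε :=
    hmain.eventually_lt_const (by simpa using hε)
  obtain ⟨n, hn⟩ := hev.exists
  refine ⟨(n:ℝ), Nat.cast_nonneg n, ?_⟩
  calc (∫⁻ s in Set.Ioc 0 t₀, ENNReal.ofReal (Real.exp (-(n:ℝ)*s) * φ s)).toReal
      ≤ (ENNReal.ofReal ε).toReal := ENNReal.toReal_mono ENNReal.ofReal_ne_top hn.le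
    _ = ε := ENNReal.toReal_ofReal hε.le

theorem stmt11
    (A : ℝ) (f g : ℝ → ℝ)
    (hfmeas : Measurable f) (hgmeas : Measurable g)
    (hfb : ∀ t ≥ (0:ℝ), ∃ C, ∀ s ∈ Set.Icc (0:ℝ) t, |f s| ≤ C)
    (hgb : ∀ t ≥ (0:ℝ), ∃ C, ∀ s ∈ Set.Icc (0:ℝ) t, |g s| ≤ C)
    (φ : ℝ → ℝ) (hφmeas : Measurable φ) (hφnonneg : ∀ s, 0 ≤ φ s)
    (hφloc : ∀ t ≥ (0:ℝ), IntegrableOn φ (Set.Icc 0 t))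
    (heq : ∀ t ≥ (0:ℝ), f t = g t + A * ∫ s in (0:ℝ)..t, φ (t - s) * f s) :
    ∀ t ≥ (0:ℝ),
      Summable (fun n : ℕ => |A| ^ (n + 1) * ∫ s in (0:ℝ)..t, convPow φ n (t - s) * |g s|) ∧
      f t = g t + ∑' n : ℕ, A ^ (n + 1) * ∫ s in (0:ℝ)..t, convPow φ n (t - s) * g s := by
  intro t ht
  obtain ⟨Cg, hCg⟩ := hgb t ht
  obtain ⟨Cf, hCf⟩ := hfb t ht
  have hCg0 : 0 ≤ Cg := le_trans (abs_nonneg _) (hCg 0 ⟨le_rfl, ht⟩)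
  have hCf0 : 0 ≤ Cf := le_trans (abs_nonneg _) (hCf 0 ⟨le_rfl, ht⟩)
  have hφint : IntegrableOn φ (Set.Icc 0 t) := hφloc t ht
  have hεpos : (0:ℝ) < 1/(2*(|A|+1)) := by positivity
  obtain ⟨lam, hlam0, hr⟩ := exists_lam hφmeas hφnonneg hφint hεpos
  set r := (∫⁻ s in Set.Ioc 0 t, ENNReal.ofReal (Real.exp (-lam*s) * φ s)).toReal with hrdef
  have hr0 : 0 ≤ r := ENNReal.toReal_nonneg
  have hAr : |A| * r ≤ 1/2 := by
    have h1 : |A| * r ≤ |A| * (1/(2*(|A|+1))) := mul_le_mul_of_nonneg_left hr (abs_nonneg A)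
    have h2 : |A| * (1/(2*(|A|+1))) ≤ 1/2 := by
      rw [mul_one_div, div_le_div_iff₀ (by positivity) (by norm_num)]
      nlinarith [abs_nonneg A]
    linarith
  have htmem : t ∈ Set.Icc (0:ℝ) t := ⟨ht, le_rfl⟩
  have habs : ∀ n : ℕ, abs (∫ s in (0:ℝ)..t, convPow φ n (t-s) * |g s|)
      ≤ Cg * Real.exp (lam*t) * r^(n+1) := fun n =>
    conv_mul_bound hφmeas hφnonneg hgmeas.abs hφint htmem
      (fun s hs => by rw [abs_abs]; exact hCg s hs) hlam0 n
  have hterm_nonneg : ∀ n : ℕ, 0 ≤ ∫ s in (0:ℝ)..t, convPow φ n (t-s) * |g s| := by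
    intro n
    apply intervalIntegral.integral_nonneg ht
    intro u hu
    exact mul_nonneg (convPow_nonneg hφnonneg n _ (by linarith [hu.2])) (abs_nonneg _)
  have hbound : ∀ n : ℕ, |A|^(n+1) * (∫ s in (0:ℝ)..t, convPow φ n (t-s) * |g s|)
      ≤ (Cg * Real.exp (lam*t)) * (1/2:ℝ)^n := by
    intro n
    calc |A|^(n+1) * (∫ s in (0:ℝ)..t, convPow φ n (t-s) * |g s|)
        ≤ |A|^(n+1) * (Cg * Real.exp (lam*t) * r^(n+1)) :=
          mul_le_mul_of_nonneg_left (le_trans (le_abs_self _) (habs n))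
            (pow_nonneg (abs_nonneg A) _)
      _ = (Cg * Real.exp (lam*t)) * (|A| * r)^(n+1) := by rw [mul_pow]; ring
      _ ≤ (Cg * Real.exp (lam*t)) * (1/2:ℝ)^(n+1) :=
          mul_le_mul_of_nonneg_left
            (pow_le_pow_left₀ (mul_nonneg (abs_nonneg A) hr0) hAr (n+1)) (by positivity)
      _ ≤ (Cg * Real.exp (lam*t)) * (1/2:ℝ)^n := by
          apply mul_le_mul_of_nonneg_left _ (by positivity)
          exact pow_le_pow_of_le_one (by norm_num) (by norm_num) (Nat.le_succ n)
  have hsum1 : Summable (fun n : ℕ => |A|^(n+1) * ∫ s in (0:ℝ)..t, convPow φ n (t-s) * |g s|) := by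
    apply Summable.of_nonneg_of_le
      (fun n => mul_nonneg (pow_nonneg (abs_nonneg A) _) (hterm_nonneg n)) hbound
    exact summable_geometric_two.mul_left _
  refine ⟨hsum1, ?_⟩
  set Sg : ℕ → ℝ := fun n => A^(n+1) * ∫ s in (0:ℝ)..t, convPow φ n (t-s) * g s with hSg
  have habs2 : ∀ n, |Sg n| ≤ |A|^(n+1) * ∫ s in (0:ℝ)..t, convPow φ n (t-s) * |g s| := by
    intro n
    rw [hSg]
    simp only [abs_mul, abs_pow]
    apply mul_le_mul_of_nonneg_left _ (pow_nonneg (abs_nonneg A) _)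
    have e : (∫ s in (0:ℝ)..t, convPow φ n (t-s) * |g s|)
        = ∫ s in (0:ℝ)..t, |convPow φ n (t-s) * g s| := by
      apply intervalIntegral.integral_congr
      intro s hs
      rw [Set.uIcc_of_le ht] at hs
      show convPow φ n (t-s) * |g s| = |convPow φ n (t-s) * g s|
      rw [abs_mul, abs_of_nonneg (convPow_nonneg hφnonneg n _ (by linarith [hs.2]))]
    rw [e]
    exact intervalIntegral.abs_integral_le_integral_abs ht
  have hsum2 : Summable Sg :=
    Summable.of_norm_bounded hsum1 (fun n => by rw [Real.norm_eq_abs]; exact habs2 n)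
  set κ : ℝ → ℝ := fun s => ∫ u in (0:ℝ)..s, φ (s-u) * f u with hκ
  have hκm : Measurable κ :=
    meas_param ((hφmeas.comp (measurable_fst.sub measurable_snd)).mul
      (hfmeas.comp measurable_snd))
  have hκb : ∀ s ∈ Set.Icc (0:ℝ) t, |κ s| ≤ Cf * Real.exp (lam*t) * r := by
    intro s hs
    have h0 := conv_mul_bound (n := 0) hφmeas hφnonneg hfmeas hφint hs hCf hlam0
    rw [pow_one] at h0
    exact h0
  have claim : ∀ N : ℕ, f t = g t + (∑ n ∈ Finset.range N, Sg n)
      + A^(N+1) * ∫ s in (0:ℝ)..t, convPow φ N (t-s) * f s := by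
    intro N
    induction N with
    | zero =>
      simp only [Finset.sum_range_zero, add_zero, pow_one, zero_add]
      exact heq t ht
    | succ N ihN =>
      have hsub : ∀ s ∈ Set.uIcc (0:ℝ) t, convPow φ N (t-s) * f s
          = convPow φ N (t-s) * g s + A * (convPow φ N (t-s) * κ s) := by
        intro s hs
        rw [Set.uIcc_of_le ht] at hs
        show convPow φ N (t-s) * f s = _
        rw [hκ]
        simp only []
        rw [heq s hs.1]
        ring
      have i1 : IntervalIntegrable (fun s => convPow φ N (t-s) * g s) volume 0 t :=
        conv_mul_intervalIntegrable hφmeas hφnonneg hgmeas hφint htmem hCg N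
      have i2' : IntervalIntegrable (fun s => convPow φ N (t-s) * κ s) volume 0 t :=
        conv_mul_intervalIntegrable hφmeas hφnonneg hκm hφint htmem hκb N
      have i2 : IntervalIntegrable (fun s => A * (convPow φ N (t-s) * κ s)) volume 0 t :=
        i2'.const_mul A
      have key : (∫ s in (0:ℝ)..t, convPow φ N (t-s) * f s)
          = (∫ s in (0:ℝ)..t, convPow φ N (t-s) * g s)
            + A * ∫ u in (0:ℝ)..t, convPow φ (N+1) (t-u) * f u := by
        rw [intervalIntegral.integral_congr hsub, intervalIntegral.integral_add i1 i2,
          intervalIntegral.integral_const_mul]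
        have e6 : (∫ s in (0:ℝ)..t, convPow φ N (t-s) * κ s)
            = ∫ u in (0:ℝ)..t, convPow φ (N+1) (t-u) * f u := by
          rw [← fubini_step hφmeas hφnonneg hfmeas hφint ht hCf N]
        rw [e6]
      calc f t = g t + (∑ n ∈ Finset.range N, Sg n)
            + A^(N+1) * ∫ s in (0:ℝ)..t, convPow φ N (t-s) * f s := ihN
        _ = g t + (∑ n ∈ Finset.range (N+1), Sg n)
            + A^(N+2) * ∫ s in (0:ℝ)..t, convPow φ (N+1) (t-s) * f s := by
            rw [key, Finset.sum_range_succ, hSg]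
            simp only []
            ring
  have hRbound : ∀ N : ℕ, ‖A^(N+1) * ∫ s in (0:ℝ)..t, convPow φ N (t-s) * f s‖
      ≤ (Cf * Real.exp (lam*t) / 2) * (1/2:ℝ)^N := by
    intro N
    rw [Real.norm_eq_abs, abs_mul, abs_pow]
    have hb := conv_mul_bound hφmeas hφnonneg hfmeas hφint htmem hCf hlam0 N
    calc |A|^(N+1) * |∫ s in (0:ℝ)..t, convPow φ N (t-s) * f s|
        ≤ |A|^(N+1) * (Cf * Real.exp (lam*t) * r^(N+1)) :=
          mul_le_mul_of_nonneg_left hb (pow_nonneg (abs_nonneg A) _)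
      _ = (Cf * Real.exp (lam*t)) * (|A| * r)^(N+1) := by rw [mul_pow]; ring
      _ ≤ (Cf * Real.exp (lam*t)) * (1/2:ℝ)^(N+1) :=
          mul_le_mul_of_nonneg_left
            (pow_le_pow_left₀ (mul_nonneg (abs_nonneg A) hr0) hAr (N+1)) (by positivity)
      _ = (Cf * Real.exp (lam*t) / 2) * (1/2:ℝ)^N := by
          rw [pow_succ]
          ring
  have hgeo : Tendsto (fun N : ℕ => (Cf * Real.exp (lam*t) / 2) * (1/2:ℝ)^N) atTop (𝓝 0) := by
    have := tendsto_pow_atTop_nhds_zero_of_lt_one (by norm_num : (0:ℝ) ≤ 1/2)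
      (by norm_num : (1/2:ℝ) < 1)
    simpa using this.const_mul (Cf * Real.exp (lam*t) / 2)
  have hR0 : Tendsto (fun N : ℕ => A^(N+1) * ∫ s in (0:ℝ)..t, convPow φ N (t-s) * f s)
      atTop (𝓝 0) := squeeze_zero_norm hRbound hgeo
  have hpartial : Tendsto (fun N => ∑ n ∈ Finset.range N, Sg n) atTop (𝓝 (f t - g t)) := by
    have he : (fun N => ∑ n ∈ Finset.range N, Sg n)
        = fun N => (f t - g t) - A^(N+1) * ∫ s in (0:ℝ)..t, convPow φ N (t-s) * f s := by
      funext N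
      have := claim N
      linarith
    rw [he]
    simpa using tendsto_const_nhds.sub hR0
  have heqsum : ∑' n, Sg n = f t - g t :=
    tendsto_nhds_unique hsum2.hasSum.tendsto_sum_nat hpartial
  linarith [heqsum]
end

section
/- Let A ∈ ℝ, let g : [0,∞) → ℝ be locally bounded measurable, and let φ : [0,∞) → [0,∞) be locally integrable. Then the equation f_t = g_t + A ∫_0^t φ(t−s) f_s ds (for all t ≥ 0) has at most one locally bounded measurable solution f : [0,∞) → ℝ; that is, if f and f̃ are two locally bounded measurable solutions then f_t = f̃_t for all t ≥ 0. -/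
open MeasureTheory Filter Topology

theorem stmt12
    (A : ℝ) (g : ℝ → ℝ) (hgmeas : Measurable g)
    (hgb : ∀ t ≥ (0:ℝ), ∃ C, ∀ s ∈ Set.Icc (0:ℝ) t, |g s| ≤ C)
    (φ : ℝ → ℝ) (hφmeas : Measurable φ) (hφnonneg : ∀ s, 0 ≤ φ s)
    (hφloc : ∀ t ≥ (0:ℝ), IntegrableOn φ (Set.Icc 0 t))
    (f f' : ℝ → ℝ)
    (hfmeas : Measurable f) (hf'meas : Measurable f')
    (hfb : ∀ t ≥ (0:ℝ), ∃ C, ∀ s ∈ Set.Icc (0:ℝ) t, |f s| ≤ C)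
    (hf'b : ∀ t ≥ (0:ℝ), ∃ C, ∀ s ∈ Set.Icc (0:ℝ) t, |f' s| ≤ C)
    (hfeq : ∀ t ≥ (0:ℝ), f t = g t + A * ∫ s in (0:ℝ)..t, φ (t - s) * f s)
    (hf'eq : ∀ t ≥ (0:ℝ), f' t = g t + A * ∫ s in (0:ℝ)..t, φ (t - s) * f' s) :
    ∀ t ≥ (0:ℝ), f t = f' t := by
  intro T hT
  set u : ℝ → ℝ := fun s => f s - f' s with hu
  suffices h : u T = 0 by
    have : f T - f' T = 0 := h
    linarith
  -- a uniform bound for |u| on [0, T]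
  obtain ⟨Cf, hCf⟩ := hfb T hT
  obtain ⟨Cf', hCf'⟩ := hf'b T hT
  set C : ℝ := max (Cf + Cf') 0 with hC
  have hC0 : 0 ≤ C := le_max_right _ _
  have hCb : ∀ s ∈ Set.Icc (0:ℝ) T, |u s| ≤ C := by
    intro s hs
    calc |u s| ≤ |f s| + |f' s| := abs_sub _ _
      _ ≤ Cf + Cf' := add_le_add (hCf s hs) (hCf' s hs)
      _ ≤ C := le_max_left _ _
  have humeas : Measurable u := hfmeas.sub hf'meas
  -- integrability of the kernel
  have hφint : ∀ t, 0 ≤ t → IntervalIntegrable (fun s => φ (t - s)) volume 0 t := by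
    intro t ht
    have h1 : IntervalIntegrable φ volume 0 t := by
      apply IntegrableOn.intervalIntegrable
      rw [Set.uIcc_of_le ht]; exact hφloc t ht
    have h2 := h1.comp_sub_left t
    simpa using h2.symm
  -- integrability of kernel times bounded measurable function
  have hmulint : ∀ t, 0 ≤ t → ∀ h : ℝ → ℝ, Measurable h →
      (∃ D, ∀ s ∈ Set.Icc (0:ℝ) t, |h s| ≤ D) →
      IntervalIntegrable (fun s => φ (t - s) * h s) volume 0 t := by
    intro t ht h hmeas hD
    obtain ⟨D, hD⟩ := hD
    have heq : (fun s => φ (t - s) * h s) = fun s => h s * φ (t - s) := by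
      ext s; ring
    rw [heq, intervalIntegrable_iff_integrableOn_Ioc_of_le ht]
    have hφ' : IntegrableOn (fun s => φ (t - s)) (Set.Ioc 0 t) := by
      have := (intervalIntegrable_iff_integrableOn_Ioc_of_le ht).mp (hφint t ht)
      exact this
    apply Integrable.bdd_mul (c := D) hφ'
    · exact hmeas.aestronglyMeasurable.restrict
    · apply (ae_restrict_iff' measurableSet_Ioc).mpr
      filter_upwards with s hs
      rw [Real.norm_eq_abs]
      exact hD s ⟨le_of_lt hs.1, hs.2⟩
  -- the equation for u
  have hueq : ∀ t, 0 ≤ t → u t = A * ∫ s in (0:ℝ)..t, φ (t - s) * u s := by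
    intro t ht
    have h1 := hfeq t ht
    have h2 := hf'eq t ht
    have hif := hmulint t ht f hfmeas (hfb t ht)
    have hif' := hmulint t ht f' hf'meas (hf'b t ht)
    have hsub : (∫ s in (0:ℝ)..t, φ (t - s) * u s)
        = (∫ s in (0:ℝ)..t, φ (t - s) * f s) - ∫ s in (0:ℝ)..t, φ (t - s) * f' s := by
      rw [← intervalIntegral.integral_sub hif hif']
      apply intervalIntegral.integral_congr
      intro s _
      simp only [u]; ring
    simp only [u]
    rw [h1, h2, hsub]; ring
  -- choose ε and δ by continuity of the primitive of φ at 0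
  set ε : ℝ := 1 / (2 * (|A| + 1)) with hε
  have hεpos : 0 < ε := by positivity
  have hAε : |A| * ε ≤ 1/2 := by
    rw [hε]
    rw [mul_one_div, div_le_div_iff₀ (by positivity) (by norm_num)]
    have : 0 ≤ |A| := abs_nonneg A
    nlinarith
  have hcont : ContinuousOn (fun r => ∫ s in (0:ℝ)..r, φ s) (Set.Icc 0 T) := by
    have h1 : IntegrableOn φ (Set.uIcc 0 T) := by rw [Set.uIcc_of_le hT]; exact hφloc T hT
    have := intervalIntegral.continuousOn_primitive_interval (a := 0) (b := T) (μ := volume) h1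
    rwa [Set.uIcc_of_le hT] at this
  have hc0 : ContinuousWithinAt (fun r => ∫ s in (0:ℝ)..r, φ s) (Set.Icc 0 T) 0 :=
    hcont 0 ⟨le_refl 0, hT⟩
  obtain ⟨δ, hδpos, hδ⟩ := Metric.continuousWithinAt_iff.mp hc0 ε hεpos
  set δ' : ℝ := δ / 2 with hδ'
  have hδ'pos : 0 < δ' := by positivity
  have hsmall : ∀ r, 0 ≤ r → r ≤ T → r ≤ δ' → (∫ s in (0:ℝ)..r, φ s) ≤ ε := by
    intro r hr hrT hrδ
    have hrδ2 : dist r 0 < δ := by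
      rw [Real.dist_eq, sub_zero, abs_of_nonneg hr]
      calc r ≤ δ / 2 := hrδ
        _ < δ := by linarith
    have := hδ ⟨hr, hrT⟩ hrδ2
    rw [Real.dist_eq, intervalIntegral.integral_same, sub_zero] at this
    exact le_of_lt (lt_of_le_of_lt (le_abs_self _) this)
  -- main induction
  have key : ∀ k : ℕ, ∀ t, 0 ≤ t → t ≤ T → t ≤ (k : ℝ) * δ' → u t = 0 := by
    intro k
    induction k with
    | zero =>
      intro t ht htT htk
      simp only [Nat.cast_zero, zero_mul] at htk
      have ht0 : t = 0 := le_antisymm htk ht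
      subst ht0
      rw [hueq 0 le_rfl, intervalIntegral.integral_same, mul_zero]
    | succ k ih =>
      intro t ht htT htk
      have inner : ∀ n : ℕ, ∀ t, 0 ≤ t → t ≤ T → t ≤ ((k : ℝ) + 1) * δ' →
          |u t| ≤ C / 2 ^ n := by
        intro n
        induction n with
        | zero =>
          intro t ht htT _
          simpa using hCb t ⟨ht, htT⟩
        | succ n ihn =>
          intro t ht htT htk
          by_cases hcase : t ≤ (k : ℝ) * δ'
          · rw [ih t ht htT hcase, abs_zero]
            positivity
          push_neg at hcase
          set a : ℝ := (k : ℝ) * δ' with ha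
          have ha0 : 0 ≤ a := by positivity
          have hat : a ≤ t := le_of_lt hcase
          have hta : t - a ≤ δ' := by
            have : ((k : ℝ) + 1) * δ' = a + δ' := by rw [ha]; ring
            linarith [htk.trans_eq this]
          -- integrability on pieces
          have hub : ∃ D, ∀ s ∈ Set.Icc (0:ℝ) t, |u s| ≤ D :=
            ⟨C, fun s hs => hCb s ⟨hs.1, hs.2.trans htT⟩⟩
          have hfull : IntervalIntegrable (fun s => φ (t - s) * u s) volume 0 t :=
            hmulint t ht u humeas hub
          have hsub1 : Set.uIcc (0:ℝ) a ⊆ Set.uIcc (0:ℝ) t := by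
            rw [Set.uIcc_of_le ha0, Set.uIcc_of_le ht]
            exact Set.Icc_subset_Icc le_rfl hat
          have hsub2 : Set.uIcc a t ⊆ Set.uIcc (0:ℝ) t := by
            rw [Set.uIcc_of_le hat, Set.uIcc_of_le ht]
            exact Set.Icc_subset_Icc ha0 le_rfl
          have hI1 : IntervalIntegrable (fun s => φ (t - s) * u s) volume 0 a :=
            hfull.mono_set hsub1
          have hI2 : IntervalIntegrable (fun s => φ (t - s) * u s) volume a t :=
            hfull.mono_set hsub2
          -- the first piece vanishes
          have hfirst : (∫ s in (0:ℝ)..a, φ (t - s) * u s) = 0 := by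
            have hzero : Set.EqOn (fun s => φ (t - s) * u s) (fun _ => (0:ℝ))
                (Set.uIcc (0:ℝ) a) := by
              intro s hs
              rw [Set.uIcc_of_le ha0] at hs
              have hsT : s ≤ T := hs.2.trans (hat.trans htT)
              simp only
              rw [ih s hs.1 hsT hs.2, mul_zero]
            rw [intervalIntegral.integral_congr hzero, intervalIntegral.integral_zero]
          -- kernel integrability on [a, t]
          have hφat : IntervalIntegrable (fun s => φ (t - s)) volume a t :=
            (hφint t ht).mono_set hsub2
          -- bound the second piece
          have habs : |∫ s in a..t, φ (t - s) * u s|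
              ≤ ∫ s in a..t, |φ (t - s) * u s| :=
            intervalIntegral.abs_integral_le_integral_abs hat
          have hmono : (∫ s in a..t, |φ (t - s) * u s|)
              ≤ ∫ s in a..t, φ (t - s) * (C / 2 ^ n) := by
            apply intervalIntegral.integral_mono_on hat hI2.abs (hφat.mul_const _)
            intro s hs
            rw [abs_mul, abs_of_nonneg (hφnonneg _)]
            have hs0 : 0 ≤ s := ha0.trans hs.1
            have hsT : s ≤ T := hs.2.trans htT
            have hsk : s ≤ ((k : ℝ) + 1) * δ' := hs.2.trans htk
            exact mul_le_mul_of_nonneg_left (ihn s hs0 hsT hsk) (hφnonneg _)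
          have hcomp : (∫ s in a..t, φ (t - s) * (C / 2 ^ n))
              = (C / 2 ^ n) * ∫ s in (0:ℝ)..(t - a), φ s := by
            rw [intervalIntegral.integral_mul_const]
            rw [intervalIntegral.integral_comp_sub_left (fun s => φ s) t]
            rw [sub_self]
            ring
          have hεbound : (∫ s in (0:ℝ)..(t - a), φ s) ≤ ε :=
            hsmall (t - a) (by linarith) (by linarith) hta
          have hint2 : |∫ s in a..t, φ (t - s) * u s| ≤ (C / 2 ^ n) * ε := by
            calc |∫ s in a..t, φ (t - s) * u s|
                ≤ ∫ s in a..t, |φ (t - s) * u s| := habs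
              _ ≤ ∫ s in a..t, φ (t - s) * (C / 2 ^ n) := hmono
              _ = (C / 2 ^ n) * ∫ s in (0:ℝ)..(t - a), φ s := hcomp
              _ ≤ (C / 2 ^ n) * ε := by
                  apply mul_le_mul_of_nonneg_left hεbound (by positivity)
          -- put it together
          have hsplit : (∫ s in (0:ℝ)..t, φ (t - s) * u s)
              = ∫ s in a..t, φ (t - s) * u s := by
            rw [← intervalIntegral.integral_add_adjacent_intervals hI1 hI2, hfirst, zero_add]
          rw [hueq t ht, hsplit, abs_mul]
          calc |A| * |∫ s in a..t, φ (t - s) * u s|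
              ≤ |A| * ((C / 2 ^ n) * ε) :=
                mul_le_mul_of_nonneg_left hint2 (abs_nonneg A)
            _ = (C / 2 ^ n) * (|A| * ε) := by ring
            _ ≤ (C / 2 ^ n) * (1 / 2) :=
                mul_le_mul_of_nonneg_left hAε (by positivity)
            _ = C / 2 ^ (n + 1) := by rw [pow_succ]; ring
      have hb : ∀ n : ℕ, |u t| ≤ C / 2 ^ n := by
        intro n
        apply inner n t ht htT
        rw [Nat.cast_succ] at htk
        exact htk
      have hlim : Tendsto (fun n : ℕ => C / 2 ^ n) atTop (𝓝 0) := by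
        have h1 : Tendsto (fun n : ℕ => ((1:ℝ)/2) ^ n) atTop (𝓝 0) :=
          tendsto_pow_atTop_nhds_zero_of_lt_one (by norm_num) (by norm_num)
        have h2 := h1.const_mul C
        rw [mul_zero] at h2
        convert h2 using 2 with n
        rw [div_pow, one_pow, mul_one_div]
      have hle : |u t| ≤ 0 := ge_of_tendsto' hlim hb
      exact abs_eq_zero.mp (le_antisymm hle (abs_nonneg _))
  obtain ⟨k, hk⟩ := exists_nat_gt (T / δ')
  apply key k T hT le_rfl
  rw [div_lt_iff₀ hδ'pos] at hk
  linarith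
end
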